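/- arXiv:2102.07181 — 10 statements merged into one kernel-verified Lean document; each statement's English description precedes it below -/
import Mathlib

section
/- Assume x_⊥ ≠ 0 (so that X₊X₊ᵀ is invertible). For every y ∈ ℝ, the minimum-norm least-squares solution fitted to the training set together with the test pair (x, y), namely θ_{N+1} := X₊ᵀ(X₊X₊ᵀ)⁻¹ Y₊(y), satisfies ‖θ_{N+1}‖² = ‖θ_MN‖² + (1/‖x_⊥‖²)·(y − x⊤θ_MN)². -/
open Matrix

/-- The norm of the minimum-norm least-squares solution fitted to the training set
together with the test pair `(x, y)` satisfies
`‖θ_{N+1}‖² = ‖θ_MN‖² + (1/‖x_⊥‖²) * (y − xᵀθ_MN)²`. -/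
theorem mn_norm_recursion {N M : ℕ}
    (X : Matrix (Fin N) (Fin M) ℝ) (Y : Fin N → ℝ) (x : Fin M → ℝ)
    (hX : IsUnit (X * Xᵀ).det)
    (Xplus : Matrix (Fin M) (Fin N) ℝ) (hXplus : Xplus = Xᵀ * (X * Xᵀ)⁻¹)
    (θMN : Fin M → ℝ) (hθMN : θMN = Xplus.mulVec Y)
    (xperp : Fin M → ℝ)
    (hxperp : xperp = ((1 : Matrix (Fin M) (Fin M) ℝ) - Xplus * X).mulVec x)
    (hxperp_ne : xperp ≠ 0)
    (Xp : Matrix (Fin (N + 1)) (Fin M) ℝ) (hXp : Xp = Matrix.of (Fin.snoc X x))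
    (y : ℝ)
    (θN1 : Fin M → ℝ)
    (hθN1 : θN1 = (Xpᵀ * (Xp * Xpᵀ)⁻¹).mulVec (Fin.snoc Y y)) :
    θN1 ⬝ᵥ θN1 = θMN ⬝ᵥ θMN + (1 / (xperp ⬝ᵥ xperp)) * (y - x ⬝ᵥ θMN) ^ 2 := by
  -- abbreviations
  set A := X * Xᵀ with hA
  set P : Matrix (Fin M) (Fin M) ℝ := 1 - Xplus * X with hP
  have hs : xperp ⬝ᵥ xperp ≠ 0 := fun h => hxperp_ne (dotProduct_self_eq_zero.mp h)
  -- X * Xplus = 1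
  have hXXp : X * Xplus = 1 := by
    rw [hXplus, ← Matrix.mul_assoc, Matrix.mul_nonsing_inv _ hX]
  -- (X*Xᵀ)⁻¹ is symmetric
  have hAinvsymm : (A⁻¹)ᵀ = A⁻¹ := by
    rw [Matrix.transpose_nonsing_inv]
    congr 1
    rw [hA, Matrix.transpose_mul, Matrix.transpose_transpose]
  -- Xplusᵀ = A⁻¹ * X
  have hXplusT : Xplusᵀ = A⁻¹ * X := by
    rw [hXplus, Matrix.transpose_mul, Matrix.transpose_transpose, hAinvsymm]
  -- X annihilates P
  have hXP : X * P = 0 := by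
    rw [hP, Matrix.mul_sub, Matrix.mul_one, ← Matrix.mul_assoc, hXXp, Matrix.one_mul,
      sub_self]
  have hXxperp : X.mulVec xperp = 0 := by
    rw [hxperp, Matrix.mulVec_mulVec, hXP, Matrix.zero_mulVec]
  -- X θMN = Y
  have hXθ : X.mulVec θMN = Y := by
    rw [hθMN, Matrix.mulVec_mulVec, hXXp, Matrix.one_mulVec]
  -- P * Xᵀ = 0
  have hPXt : P * Xᵀ = 0 := by
    rw [hP, Matrix.sub_mul, Matrix.one_mul, hXplus, Matrix.mul_assoc,
      Matrix.mul_assoc, Matrix.nonsing_inv_mul _ hX, Matrix.mul_one, sub_self]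
  -- P is symmetric
  have hPsymm : Pᵀ = P := by
    rw [hP, Matrix.transpose_sub, Matrix.transpose_one, Matrix.transpose_mul, hXplusT,
      hXplus, Matrix.mul_assoc]
  -- P idempotent
  have hQ : (Xplus * X) * (Xplus * X) = Xplus * X := by
    rw [Matrix.mul_assoc, ← Matrix.mul_assoc X, hXXp, Matrix.one_mul]
  have hPP : P * P = P := by
    rw [hP, Matrix.sub_mul, Matrix.mul_sub, Matrix.mul_sub, Matrix.one_mul,
      Matrix.mul_one, Matrix.one_mul, hQ, sub_self, sub_zero]
  -- θMN ⟂ xperp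
  have horth : θMN ⬝ᵥ xperp = 0 := by
    have : xperp ⬝ᵥ θMN = 0 := by
      rw [hθMN, Matrix.dotProduct_mulVec, ← Matrix.mulVec_transpose, hXplusT,
        ← Matrix.mulVec_mulVec, hXxperp, Matrix.mulVec_zero, zero_dotProduct]
    rw [dotProduct_comm]; exact this
  -- x ⬝ xperp = xperp ⬝ xperp
  have hxxperp : x ⬝ᵥ xperp = xperp ⬝ᵥ xperp := by
    have h1 : xperp ⬝ᵥ xperp = xperp ⬝ᵥ (P.mulVec x) := by rw [← hxperp]
    rw [h1, Matrix.dotProduct_mulVec, ← Matrix.mulVec_transpose, hPsymm, hxperp,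
      Matrix.mulVec_mulVec, hPP, ← hxperp, dotProduct_comm]
  -- the candidate solution
  set d := y - x ⬝ᵥ θMN with hd
  set c := d / (xperp ⬝ᵥ xperp) with hc
  set θstar := θMN + c • xperp with hθstar
  -- mulVec structure of Xp
  have hXpv : ∀ t : Fin M → ℝ, Xp.mulVec t = Fin.snoc (X.mulVec t) (x ⬝ᵥ t) := by
    intro t; funext i
    refine Fin.lastCases ?_ (fun k => ?_) i
    · simp [hXp, Matrix.mulVec, dotProduct, Fin.snoc]
    · simp [hXp, Matrix.mulVec, dotProduct, Fin.snoc]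
  have hXpt : ∀ (w : Fin N → ℝ) (a : ℝ),
      Xpᵀ.mulVec (Fin.snoc w a) = Xᵀ.mulVec w + a • x := by
    intro w a; funext j
    simp [hXp, Matrix.mulVec, dotProduct, Fin.sum_univ_castSucc, mul_comm, Fin.snoc]
  -- Xp θstar = (Y, y)
  have hXθstar : Xp.mulVec θstar = Fin.snoc Y y := by
    have h1 : X.mulVec θstar = Y := by
      rw [hθstar, Matrix.mulVec_add, hXθ, Matrix.mulVec_smul, hXxperp, smul_zero,
        add_zero]
    have h2 : x ⬝ᵥ θstar = y := by
      rw [hθstar, dotProduct_add, dotProduct_smul, hxxperp, smul_eq_mul, hc,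
        div_mul_cancel₀ _ hs, hd]
      ring
    rw [hXpv, h1, h2]
  -- θstar lies in the row space of Xp
  set v : Fin (N + 1) → ℝ :=
    Fin.snoc (A⁻¹.mulVec Y - c • (A⁻¹.mulVec (X.mulVec x))) c with hv
  have hθMN' : θMN = Xᵀ.mulVec (A⁻¹.mulVec Y) := by
    rw [hθMN, hXplus, ← Matrix.mulVec_mulVec]
  have hxperp' : xperp = x - Xᵀ.mulVec (A⁻¹.mulVec (X.mulVec x)) := by
    rw [hxperp, hP, Matrix.sub_mulVec, Matrix.one_mulVec, hXplus,
      ← Matrix.mulVec_mulVec, ← Matrix.mulVec_mulVec]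
  have hXptv : Xpᵀ.mulVec v = θstar := by
    rw [hv, hXpt, Matrix.mulVec_sub, Matrix.mulVec_smul, hθstar, hθMN', hxperp',
      smul_sub]
    abel
  have hApv : (Xp * Xpᵀ).mulVec v = Fin.snoc Y y := by
    rw [← Matrix.mulVec_mulVec, hXptv, hXθstar]
  -- Xp * Xpᵀ is invertible
  have hApdet : IsUnit (Xp * Xpᵀ).det := by
    rw [isUnit_iff_ne_zero]
    intro hdet
    obtain ⟨w, hw0, hw⟩ := (Matrix.exists_mulVec_eq_zero_iff).mpr hdet
    have hXtw : Xpᵀ.mulVec w = 0 := by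
      have h0 : (Xpᵀ.mulVec w) ⬝ᵥ (Xpᵀ.mulVec w) = 0 := by
        have : w ⬝ᵥ (Xp * Xpᵀ).mulVec w = 0 := by rw [hw, dotProduct_zero]
        rw [← Matrix.mulVec_mulVec, Matrix.dotProduct_mulVec,
          ← Matrix.mulVec_transpose] at this
        rw [dotProduct_comm]; exact this
      exact dotProduct_self_eq_zero.mp h0
    have hws : Xᵀ.mulVec (Fin.init w) + (w (Fin.last N)) • x = 0 := by
      rw [← hXpt, Fin.snoc_init_self, hXtw]
    have hPws : (w (Fin.last N)) • xperp = 0 := by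
      have := congrArg P.mulVec hws
      rw [Matrix.mulVec_add, Matrix.mulVec_mulVec, hPXt, Matrix.zero_mulVec,
        zero_add, Matrix.mulVec_smul, ← hxperp, Matrix.mulVec_zero] at this
      exact this
    have ha : w (Fin.last N) = 0 := by
      rcases smul_eq_zero.mp hPws with h | h
      · exact h
      · exact absurd h hxperp_ne
    have hw' : Fin.init w = 0 := by
      have h1 : Xᵀ.mulVec (Fin.init w) = 0 := by
        rw [ha, zero_smul, add_zero] at hws; exact hws
      have h2 : A.mulVec (Fin.init w) = 0 := by
        rw [hA, ← Matrix.mulVec_mulVec, h1, Matrix.mulVec_zero]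
      have := congrArg (A⁻¹.mulVec) h2
      rwa [Matrix.mulVec_mulVec, Matrix.nonsing_inv_mul _ hX, Matrix.one_mulVec,
        Matrix.mulVec_zero] at this
    apply hw0
    funext i
    refine Fin.lastCases ?_ (fun k => ?_) i
    · exact ha
    · have : Fin.init w k = 0 := by rw [hw']; rfl
      exact this
  -- conclude θN1 = θstar
  have hθeq : θN1 = θstar := by
    have hiv : (Xp * Xpᵀ)⁻¹.mulVec (Fin.snoc Y y) = v := by
      rw [← hApv, Matrix.mulVec_mulVec, Matrix.nonsing_inv_mul _ hApdet,
        Matrix.one_mulVec]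
    rw [hθN1, ← Matrix.mulVec_mulVec, hiv, hXptv]
  -- final computation
  rw [hθeq, hθstar]
  have expand : (θMN + c • xperp) ⬝ᵥ (θMN + c • xperp)
      = θMN ⬝ᵥ θMN + c * (θMN ⬝ᵥ xperp) + c * (xperp ⬝ᵥ θMN) + c * c * (xperp ⬝ᵥ xperp) := by
    simp [dotProduct_add, add_dotProduct, dotProduct_smul, smul_dotProduct,
      smul_eq_mul]
    ring
  rw [expand, horth, dotProduct_comm xperp θMN, horth]
  rw [hc]
  field_simp
  ring
end

section
/- Let σ > 0, λ > 0 and y ∈ ℝ. Let θ_N := (XᵀX + λI)⁻¹XᵀY be the ridge solution on the training set and θ₊ := (XᵀX + x xᵀ + λI)⁻¹(XᵀY + x y) the ridge solution on the training set augmented by the test pair (x, y), with the same regularization λ. Then, with K₀ := 1 + x⊤X⁺(X⁺)ᵀx, the genie probability assignment satisfies (2πσ²)^{−1/2}·exp(−(y − x⊤θ₊)²/(2σ²)) ≤ (2πσ²)^{−1/2}·exp(−(y − x⊤θ_N)² / (2σ²·K₀²·(1 + ‖x_⊥‖²/(K₀λ))²)). -/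
open Matrix

private lemma quad_nonneg' {m n : ℕ} (B : Matrix (Fin m) (Fin n) ℝ) (v : Fin m → ℝ) :
    0 ≤ v ⬝ᵥ (B * Bᵀ).mulVec v := by
  rw [← Matrix.mulVec_mulVec, Matrix.dotProduct_mulVec]
  rw [show v ᵥ* B = Bᵀ *ᵥ v by
    rw [← Matrix.transpose_transpose B, Matrix.vecMul_transpose, Matrix.transpose_transpose]]
  exact Finset.sum_nonneg fun i _ => mul_self_nonneg _

private lemma dot_mulVec_self' {m n : ℕ} (B : Matrix (Fin m) (Fin n) ℝ) (v : Fin n → ℝ) :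
    (B.mulVec v) ⬝ᵥ (B.mulVec v) = v ⬝ᵥ ((Bᵀ * B).mulVec v) := by
  conv_rhs => rw [← Matrix.mulVec_mulVec, Matrix.dotProduct_mulVec, Matrix.vecMul_transpose]

/-- Upper bound on the genie probability assignment for over-parameterized ridge regression. -/
theorem genie_upper_bound {N M : ℕ}
    (X : Matrix (Fin N) (Fin M) ℝ) (Y : Fin N → ℝ) (x : Fin M → ℝ)
    (hX : IsUnit (X * Xᵀ).det)
    (Xplus : Matrix (Fin M) (Fin N) ℝ) (hXplus : Xplus = Xᵀ * (X * Xᵀ)⁻¹)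
    (xperp : Fin M → ℝ)
    (hxperp : xperp = ((1 : Matrix (Fin M) (Fin M) ℝ) - Xplus * X).mulVec x)
    (σ lam y : ℝ) (hσ : 0 < σ) (hlam : 0 < lam)
    (θN : Fin M → ℝ)
    (hθN : θN = (Xᵀ * X + lam • (1 : Matrix (Fin M) (Fin M) ℝ))⁻¹.mulVec (Xᵀ.mulVec Y))
    (θp : Fin M → ℝ)
    (hθp : θp = (Xᵀ * X + vecMulVec x x + lam • (1 : Matrix (Fin M) (Fin M) ℝ))⁻¹.mulVec
      (Xᵀ.mulVec Y + y • x))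
    (K0 : ℝ) (hK0 : K0 = 1 + x ⬝ᵥ (Xplus * Xplusᵀ).mulVec x) :
    (Real.sqrt (2 * Real.pi * σ ^ 2))⁻¹ * Real.exp (-(y - x ⬝ᵥ θp) ^ 2 / (2 * σ ^ 2)) ≤
      (Real.sqrt (2 * Real.pi * σ ^ 2))⁻¹ *
        Real.exp (-(y - x ⬝ᵥ θN) ^ 2 /
          (2 * σ ^ 2 * K0 ^ 2 * (1 + (xperp ⬝ᵥ xperp) / (K0 * lam)) ^ 2)) := by
  set G := X * Xᵀ with hG
  have hXXi : ∀ {k : ℕ} (Z : Matrix (Fin N) (Fin k) ℝ), X * (Xᵀ * (G⁻¹ * Z)) = Z := by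
    intro k Z
    rw [← Matrix.mul_assoc, ← Matrix.mul_assoc, ← hG, Matrix.mul_nonsing_inv _ hX,
      Matrix.one_mul]
  have hGiX : ∀ {k : ℕ} (Z : Matrix (Fin N) (Fin k) ℝ), G⁻¹ * (X * (Xᵀ * Z)) = Z := by
    intro k Z
    rw [← Matrix.mul_assoc, ← Matrix.mul_assoc, Matrix.mul_assoc G⁻¹, ← hG,
      Matrix.nonsing_inv_mul _ hX, Matrix.one_mul]
  have hGsym : Gᵀ = G := by rw [hG, Matrix.transpose_mul, Matrix.transpose_transpose]
  have hGisym : (G⁻¹)ᵀ = G⁻¹ := by rw [Matrix.transpose_nonsing_inv, hGsym]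
  set P := Xᵀ * (G⁻¹ * X) with hP
  set Q := Xᵀ * (G⁻¹ * (G⁻¹ * X)) with hQ
  set A := Xᵀ * X + lam • (1 : Matrix (Fin M) (Fin M) ℝ) with hA
  -- the central algebraic identity
  have hkey : A * ((lam • Q + (1 - P)) * A) = lam • A + (lam^2) • P + (lam^3) • Q := by
    simp only [hA, hP, hQ, Matrix.mul_add, Matrix.add_mul, Matrix.mul_sub, Matrix.sub_mul,
      Matrix.mul_smul, Matrix.smul_mul, Matrix.mul_assoc, hXXi, hGiX, Matrix.mul_one,
      Matrix.one_mul, smul_smul, smul_add, smul_sub]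
    module
  -- symmetry and projection facts about P and Q
  have hPsym : Pᵀ = P := by
    rw [hP, Matrix.transpose_mul, Matrix.transpose_mul, hGisym, Matrix.transpose_transpose,
      Matrix.mul_assoc]
  have hQfact : Q = (Xᵀ * G⁻¹) * (Xᵀ * G⁻¹)ᵀ := by
    rw [Matrix.transpose_mul, hGisym, Matrix.transpose_transpose, Matrix.mul_assoc,
      ← Matrix.mul_assoc G⁻¹, hQ, Matrix.mul_assoc]
  have hQnn : ∀ v : Fin M → ℝ, 0 ≤ v ⬝ᵥ Q.mulVec v := by
    intro v; rw [hQfact]; exact quad_nonneg' _ v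
  have hPP : P * Pᵀ = P := by
    rw [hPsym]
    simp only [hP, Matrix.mul_assoc, hXXi, hGiX]
  have hPP2 : P * P = P := by rwa [hPsym] at hPP
  have hPnn : ∀ v : Fin M → ℝ, 0 ≤ v ⬝ᵥ P.mulVec v := by
    intro v; rw [← hPP]; exact quad_nonneg' _ v
  -- positive definiteness of A
  have hXtX : (Xᵀ * X).PosSemidef := by
    have := Matrix.posSemidef_conjTranspose_mul_self X
    rwa [Matrix.conjTranspose_eq_transpose_of_trivial] at this
  have hlamI : (lam • (1 : Matrix (Fin M) (Fin M) ℝ)).PosDef := by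
    rw [Matrix.smul_one_eq_diagonal]
    exact Matrix.PosDef.diagonal fun _ => hlam
  have hApd : A.PosDef := Matrix.PosDef.posSemidef_add hXtX hlamI
  have hAdet : IsUnit A.det := hApd.det_pos.ne'.isUnit
  have hAi1 : A * A⁻¹ = 1 := Matrix.mul_nonsing_inv _ hAdet
  have hAi2 : A⁻¹ * A = 1 := Matrix.nonsing_inv_mul _ hAdet
  have hAsym : Aᵀ = A := by
    rw [hA, Matrix.transpose_add, Matrix.transpose_mul, Matrix.transpose_transpose,
      Matrix.transpose_smul, Matrix.transpose_one]
  have hAisym : (A⁻¹)ᵀ = A⁻¹ := by rw [Matrix.transpose_nonsing_inv, hAsym]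
  -- the vector u and scalar s
  set u := A⁻¹.mulVec x with hu
  set s := x ⬝ᵥ u with hs
  have hAipsd : (A⁻¹).PosSemidef := hApd.inv.posSemidef
  have hs_nonneg : 0 ≤ s := by
    have := hAipsd.dotProduct_mulVec_nonneg x
    rw [hs, hu]
    simpa using this
  have h1s : (0:ℝ) < 1 + s := by linarith
  -- Sherman–Morrison style: closed form for θp
  set r := y - x ⬝ᵥ θN with hr
  set c := r / (1 + s) with hc
  have hc1s : c * (1 + s) = r := div_mul_cancel₀ _ h1s.ne'
  set A2 := Xᵀ * X + vecMulVec x x + lam • (1 : Matrix (Fin M) (Fin M) ℝ) with hA2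
  have hA2eq : A2 = A + vecMulVec x x := by rw [hA2, hA]; abel
  have hvvmul : ∀ v : Fin M → ℝ, (vecMulVec x x).mulVec v = (x ⬝ᵥ v) • x := by
    intro v
    ext i
    simp only [Matrix.mulVec, Matrix.vecMulVec_apply, dotProduct, Pi.smul_apply,
      smul_eq_mul, Finset.sum_mul]
    exact Finset.sum_congr rfl fun j _ => by ring
  have hA2pd : A2.PosDef := by
    rw [hA2]
    refine Matrix.PosDef.posSemidef_add (Matrix.PosSemidef.add hXtX ?_) hlamI
    refine Matrix.PosSemidef.of_dotProduct_mulVec_nonneg ?_ fun v => ?_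
    · ext i j
      simp [Matrix.conjTranspose_apply, Matrix.vecMulVec_apply, mul_comm]
    · rw [hvvmul, dotProduct_smul]
      simp only [star_trivial, smul_eq_mul]
      rw [dotProduct_comm]
      exact mul_self_nonneg _
  have hA2det : IsUnit A2.det := hA2pd.det_pos.ne'.isUnit
  have hA2i2 : A2⁻¹ * A2 = 1 := Matrix.nonsing_inv_mul _ hA2det
  have hAmulθN : A.mulVec θN = Xᵀ.mulVec Y := by
    rw [hθN, Matrix.mulVec_mulVec, hAi1, Matrix.one_mulVec]
  have hAmulu : A.mulVec u = x := by
    rw [hu, Matrix.mulVec_mulVec, hAi1, Matrix.one_mulVec]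
  have hy : y = c + (x ⬝ᵥ θN + c * s) := by
    have h2 : c * (1 + s) = y - x ⬝ᵥ θN := by rw [hc1s, hr]
    linear_combination -h2
  have hw : A2.mulVec (θN + c • u) = Xᵀ.mulVec Y + y • x := by
    rw [hA2eq, Matrix.add_mulVec, Matrix.mulVec_add, Matrix.mulVec_smul, hAmulθN, hAmulu,
      hvvmul, dotProduct_add, dotProduct_smul, smul_eq_mul, ← hs]
    rw [hy]
    simp only [add_smul]
    abel
  have hθp_eq : θp = θN + c • u := by
    rw [hθp, ← hw, Matrix.mulVec_mulVec, hA2i2, Matrix.one_mulVec]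
  have hresid : y - x ⬝ᵥ θp = c := by
    rw [hθp_eq, dotProduct_add, dotProduct_smul, smul_eq_mul, ← hs]
    linear_combination -hc1s - hr
  -- quadratic form bound : lam * s ≤ lam * qx + perp²
  have hMform : lam • Q + (1 - P) =
      A⁻¹ * ((lam • A + (lam^2) • P + (lam^3) • Q) * A⁻¹) := by
    have h := congrArg (fun Z => A⁻¹ * (Z * A⁻¹)) hkey
    have hAL : ∀ Z : Matrix (Fin M) (Fin M) ℝ, A⁻¹ * (A * Z) = Z := by
      intro Z; rw [← Matrix.mul_assoc, hAi2, Matrix.one_mul]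
    rw [Matrix.mul_assoc A _ A⁻¹, Matrix.mul_assoc _ A A⁻¹, hAi1, Matrix.mul_one, hAL] at h
    exact h
  have hquadu : ∀ C : Matrix (Fin M) (Fin M) ℝ,
      x ⬝ᵥ (A⁻¹ * (C * A⁻¹)).mulVec x = u ⬝ᵥ C.mulVec u := by
    intro C
    rw [← Matrix.mulVec_mulVec, Matrix.dotProduct_mulVec,
      show x ᵥ* A⁻¹ = u by rw [← hAisym, Matrix.vecMul_transpose, hu],
      ← Matrix.mulVec_mulVec, ← hu]
  have hXpX : Xplus * X = P := by
    rw [hXplus, Matrix.mul_assoc, ← hP]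
  have hproj : ((1 : Matrix (Fin M) (Fin M) ℝ) - P)ᵀ * (1 - P) = 1 - P := by
    rw [Matrix.transpose_sub, Matrix.transpose_one, hPsym, Matrix.sub_mul, Matrix.mul_sub,
      Matrix.mul_sub, Matrix.one_mul, Matrix.one_mul, Matrix.mul_one, hPP2]
    abel
  have hperp : xperp ⬝ᵥ xperp = x ⬝ᵥ ((1 - P).mulVec x) := by
    rw [hxperp, hXpX, dot_mulVec_self', hproj]
  have hbound : lam * s ≤ lam * (x ⬝ᵥ Q.mulVec x) + xperp ⬝ᵥ xperp := by
    have happ := congrArg (fun Z : Matrix (Fin M) (Fin M) ℝ => x ⬝ᵥ Z.mulVec x) hMform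
    rw [hquadu] at happ
    have hus : u ⬝ᵥ A.mulVec u = s := by
      rw [hAmulu, hs, dotProduct_comm]
    simp only [Matrix.add_mulVec, Matrix.sub_mulVec, Matrix.smul_mulVec,
      dotProduct_add, dotProduct_sub, dotProduct_smul,
      Matrix.one_mulVec, smul_eq_mul, hus] at happ
    have hPu : 0 ≤ u ⬝ᵥ P.mulVec u := hPnn u
    have hQu : 0 ≤ u ⬝ᵥ Q.mulVec u := hQnn u
    have hl2 : 0 ≤ lam^2 * (u ⬝ᵥ P.mulVec u) := mul_nonneg (sq_nonneg lam) hPu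
    have hl3 : 0 ≤ lam^3 * (u ⬝ᵥ Q.mulVec u) :=
      mul_nonneg (le_of_lt (by positivity)) hQu
    rw [hperp, Matrix.sub_mulVec, Matrix.one_mulVec, dotProduct_sub]
    linarith [happ]
  -- final comparison
  have hqxnn : 0 ≤ x ⬝ᵥ Q.mulVec x := hQnn x
  have hw2nn : 0 ≤ xperp ⬝ᵥ xperp := Finset.sum_nonneg fun i _ => mul_self_nonneg _
  have hK0' : K0 = 1 + x ⬝ᵥ Q.mulVec x := by rw [hK0, hXplus, ← hQfact]
  have hK0pos : (0:ℝ) < K0 := by rw [hK0']; linarith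
  set T := K0 * (1 + (xperp ⬝ᵥ xperp) / (K0 * lam)) with hT
  have hTeq : T = K0 + (xperp ⬝ᵥ xperp) / lam := by
    rw [hT]
    field_simp
  have h1sT : 1 + s ≤ T := by
    rw [hTeq, hK0']
    have hdiv : (xperp ⬝ᵥ xperp) / lam * lam = xperp ⬝ᵥ xperp :=
      div_mul_cancel₀ _ hlam.ne'
    nlinarith [hbound, hlam]
  have hTpos : (0:ℝ) < T := lt_of_lt_of_le h1s h1sT
  rw [hresid]
  apply mul_le_mul_of_nonneg_left _ (inv_nonneg.mpr (Real.sqrt_nonneg _))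
  rw [Real.exp_le_exp]
  rw [show 2 * σ^2 * K0^2 * (1 + (xperp ⬝ᵥ xperp) / (K0 * lam))^2 = 2 * σ^2 * T^2 by
    rw [hT]; ring]
  rw [neg_div, neg_div, neg_le_neg_iff]
  have hceq : c^2 / (2 * σ^2) = r^2 / (2 * σ^2 * (1 + s)^2) := by
    rw [hc, div_pow, div_div, mul_comm ((1 + s)^2) (2 * σ^2)]
  rw [hceq]
  clear_value T s r c u A2 A P Q G
  have h2σ : (0:ℝ) < 2 * σ^2 := by positivity
  have hd1 : (0:ℝ) < 2 * σ^2 * (1 + s)^2 := mul_pos h2σ (pow_pos h1s 2)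
  have hd2 : (0:ℝ) < 2 * σ^2 * T^2 := mul_pos h2σ (pow_pos hTpos 2)
  rw [div_le_div_iff₀ hd2 hd1]
  have hsq : (1 + s)^2 ≤ T^2 := pow_le_pow_left₀ h1s.le h1sT 2
  have hmul := mul_le_mul_of_nonneg_left hsq (mul_nonneg (sq_nonneg r) h2σ.le)
  rw [show r^2 * (2 * σ^2 * (1 + s)^2) = r^2 * (2 * σ^2) * (1 + s)^2 from by ring,
    show r^2 * (2 * σ^2 * T^2) = r^2 * (2 * σ^2) * T^2 from by ring]
  exact hmul
end

section
/- Let σ > 0. For y ∈ ℝ let θ̂(y) := (XᵀX + x xᵀ)⁻¹(XᵀY + x y) be the least-squares solution on the training set augmented by the test pair (x, y) (XᵀX + x xᵀ is invertible since XᵀX is positive definite). Then the pNML normalization factor for under-parameterized linear regression equals ∫_ℝ (2πσ²)^{−1/2}·exp(−(y − x⊤θ̂(y))²/(2σ²)) dy = 1 + x⊤(XᵀX)⁻¹x; in particular the pNML regret is Γ₀ = log(1 + x⊤(XᵀX)⁻¹x). -/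
open Matrix MeasureTheory

lemma vecMulVec_mulVec' {M : ℕ} (w v u : Fin M → ℝ) :
    (vecMulVec w v) *ᵥ u = (v ⬝ᵥ u) • w := by
  ext i
  simp [vecMulVec, mulVec, dotProduct, Finset.mul_sum, mul_comm, mul_left_comm, smul_eq_mul]

/-- The pNML normalization factor for under-parameterized linear regression equals
`K₀ = 1 + xᵀ(XᵀX)⁻¹x`; in particular the pNML regret is `Γ₀ = log K₀`. -/
theorem underparam_pnml_normalization {N M : ℕ}
    (X : Matrix (Fin N) (Fin M) ℝ) (Y : Fin N → ℝ) (x : Fin M → ℝ)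
    (hX : IsUnit (Xᵀ * X).det)
    (σ : ℝ) (hσ : 0 < σ)
    (θhat : ℝ → Fin M → ℝ)
    (hθhat : ∀ y : ℝ, θhat y = (Xᵀ * X + vecMulVec x x)⁻¹.mulVec (Xᵀ.mulVec Y + y • x)) :
    (∫ y : ℝ, (Real.sqrt (2 * Real.pi * σ ^ 2))⁻¹ *
        Real.exp (-(y - x ⬝ᵥ θhat y) ^ 2 / (2 * σ ^ 2))) =
      1 + x ⬝ᵥ (Xᵀ * X)⁻¹.mulVec x ∧
    Real.log (∫ y : ℝ, (Real.sqrt (2 * Real.pi * σ ^ 2))⁻¹ *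
        Real.exp (-(y - x ⬝ᵥ θhat y) ^ 2 / (2 * σ ^ 2))) =
      Real.log (1 + x ⬝ᵥ (Xᵀ * X)⁻¹.mulVec x) := by
  set A := Xᵀ * X with hA
  -- A is positive semidefinite
  have hPSD : A.PosSemidef := by
    have := Matrix.posSemidef_conjTranspose_mul_self X
    rwa [Matrix.conjTranspose_eq_transpose_of_trivial] at this
  -- A is positive definite
  have hPD : A.PosDef := by
    refine PosDef.of_dotProduct_mulVec_pos hPSD.isHermitian (fun v hv => ?_)
    rcases (hPSD.dotProduct_mulVec_nonneg v).lt_or_eq with h | h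
    · exact h
    · exfalso
      apply hv
      have hXv : X *ᵥ v = 0 := by
        have hsum : (X *ᵥ v) ⬝ᵥ (X *ᵥ v) = 0 := by
          have : star v ⬝ᵥ (A *ᵥ v) = (X *ᵥ v) ⬝ᵥ (X *ᵥ v) := by
            simp only [hA, star_trivial, ← Matrix.mulVec_mulVec, Matrix.mulVec_transpose,
              Matrix.dotProduct_mulVec]
            rw [dotProduct_comm]
          rw [← this, ← h]
        ext i
        have : ∀ j ∈ Finset.univ, 0 ≤ (X *ᵥ v) j * (X *ᵥ v) j := fun j _ => mul_self_nonneg _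
        have hz := (Finset.sum_eq_zero_iff_of_nonneg this).mp hsum i (Finset.mem_univ i)
        simpa [mul_self_eq_zero] using hz
      have hAv : A *ᵥ v = 0 := by
        rw [hA, ← Matrix.mulVec_mulVec, hXv, Matrix.mulVec_zero]
      have : A⁻¹ *ᵥ (A *ᵥ v) = v := by
        rw [Matrix.mulVec_mulVec, Matrix.nonsing_inv_mul _ hX, Matrix.one_mulVec]
      rw [← this, hAv, Matrix.mulVec_zero]
  -- xxᵀ is positive semidefinite
  have hxxPSD : (vecMulVec x x).PosSemidef := by
    refine PosSemidef.of_dotProduct_mulVec_nonneg ?_ (fun v => ?_)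
    · ext i j
      simp [Matrix.conjTranspose_apply, vecMulVec, mul_comm]
    · rw [vecMulVec_mulVec']
      simp only [star_trivial, dotProduct_smul, smul_eq_mul]
      rw [dotProduct_comm]
      exact mul_self_nonneg _
  have hCPD : (A + vecMulVec x x).PosDef := hPD.add_posSemidef hxxPSD
  have hC : IsUnit (A + vecMulVec x x).det := hCPD.det_pos.ne'.isUnit
  set b := Xᵀ *ᵥ Y with hb
  set u := A⁻¹ *ᵥ x with hu
  set s := x ⬝ᵥ u with hs'
  set d := x ⬝ᵥ (A⁻¹ *ᵥ b) with hd
  have hs : 0 ≤ s := by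
    have := hPD.inv.posSemidef.dotProduct_mulVec_nonneg x
    simpa [hs', hu] using this
  have h1s : (0:ℝ) < 1 + s := by linarith
  have hAu : A *ᵥ u = x := by
    rw [hu, Matrix.mulVec_mulVec, Matrix.mul_nonsing_inv _ hX, Matrix.one_mulVec]
  -- closed form of θhat
  have hθ : ∀ y : ℝ, θhat y = A⁻¹ *ᵥ b + ((y - d)/(1+s)) • u := by
    intro y
    have hsolve : (A + vecMulVec x x) *ᵥ (A⁻¹ *ᵥ b + ((y - d)/(1+s)) • u) = b + y • x := by
      rw [Matrix.mulVec_add, Matrix.mulVec_smul, Matrix.add_mulVec, Matrix.add_mulVec,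
        vecMulVec_mulVec', vecMulVec_mulVec', Matrix.mulVec_mulVec,
        Matrix.mul_nonsing_inv _ hX, Matrix.one_mulVec, hAu, ← hd, ← hs']
      have hx1 : ((y - d)/(1+s)) • (x + s • x) = (y - d) • x := by
        rw [smul_add, smul_smul, ← add_smul]
        congr 1
        field_simp
      rw [hx1, add_assoc, ← add_smul]
      congr 2
      ring
    rw [hθhat y, ← hsolve, Matrix.mulVec_mulVec, Matrix.nonsing_inv_mul _ hC,
      Matrix.one_mulVec]
  -- residual formula
  have hres : ∀ y : ℝ, y - x ⬝ᵥ θhat y = (y - d)/(1+s) := by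
    intro y
    have h1s' : (1+s) ≠ 0 := h1s.ne'
    rw [hθ y, dotProduct_add, dotProduct_smul, ← hd, ← hs', smul_eq_mul]
    field_simp
    ring
  -- the Gaussian integral
  set K := Real.sqrt (2 * Real.pi * σ ^ 2) with hK
  have hKpos : 0 < K := Real.sqrt_pos.mpr (by positivity)
  set c : ℝ := 1 / (2 * σ ^ 2 * (1+s)^2) with hc
  have hcpos : 0 < c := by positivity
  have hpoint : ∀ y : ℝ,
      K⁻¹ * Real.exp (-(y - x ⬝ᵥ θhat y) ^ 2 / (2 * σ ^ 2)) =
      K⁻¹ * Real.exp (-c * (y - d) ^ 2) := by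
    intro y
    have h1s' : (1+s) ≠ 0 := h1s.ne'
    have hσ' : σ ≠ 0 := hσ.ne'
    have hexp : -((y - d)/(1+s)) ^ 2 / (2 * σ ^ 2) = -c * (y - d) ^ 2 := by
      rw [hc]
      field_simp
    rw [hres y, hexp]
  have hint : (∫ y : ℝ, K⁻¹ * Real.exp (-(y - x ⬝ᵥ θhat y) ^ 2 / (2 * σ ^ 2))) = 1 + s := by
    calc (∫ y : ℝ, K⁻¹ * Real.exp (-(y - x ⬝ᵥ θhat y) ^ 2 / (2 * σ ^ 2)))
        = ∫ y : ℝ, K⁻¹ * Real.exp (-c * (y - d) ^ 2) := by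
          exact integral_congr_ae (Filter.Eventually.of_forall hpoint)
      _ = K⁻¹ * ∫ y : ℝ, Real.exp (-c * (y - d) ^ 2) := integral_const_mul _ _
      _ = K⁻¹ * ∫ y : ℝ, Real.exp (-c * y ^ 2) := by
          rw [integral_sub_right_eq_self (fun y => Real.exp (-c * y ^ 2)) d]
      _ = K⁻¹ * Real.sqrt (Real.pi / c) := by rw [integral_gaussian]
      _ = K⁻¹ * (K * (1+s)) := by
          congr 1
          have h1 : Real.pi / c = (K * (1+s))^2 := by
            rw [mul_pow, hK, Real.sq_sqrt (by positivity), hc]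
            field_simp
          rw [h1, Real.sqrt_sq (by positivity)]
      _ = 1 + s := by
          rw [← mul_assoc, inv_mul_cancel₀ hKpos.ne', one_mul]
  exact ⟨hint, by rw [hint]⟩
end

section
/- Let 𝒴 be a finite nonempty set, let p : 𝒴 → ℝ be a strictly positive function (the genie's probability assignment p(y) = p_{θ̂(y)}(y|x)), and set K := Σ_{y ∈ 𝒴} p(y). Then: (i) the probability assignment q* := p/K satisfies log(p(y)/q*(y)) = log K for every y ∈ 𝒴; and (ii) for every probability assignment q : 𝒴 → ℝ with q(y) ≥ 0 for all y and Σ_{y} q(y) = 1, there exists y ∈ 𝒴 with K·q(y) ≤ p(y), so that max_{y} log(p(y)/q(y)) ≥ log K whenever q is strictly positive. Hence q* attains the min-max regret min_q max_y log(p(y)/q(y)) = log K. -/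
open Finset

/-- The pNML learner `q* = p / K` equalizes the regret `log(p(y)/q*(y)) = log K`, and every
probability assignment `q` suffers regret at least `log K` on some label; hence `q*` attains the
min-max regret `min_q max_y log(p(y)/q(y)) = log K`. -/
theorem pnml_minmax_regret {𝒴 : Type*} [Fintype 𝒴] [Nonempty 𝒴]
    (p : 𝒴 → ℝ) (hp : ∀ y, 0 < p y)
    (K : ℝ) (hK : K = ∑ y, p y)
    (qstar : 𝒴 → ℝ) (hqstar : qstar = fun y => p y / K) :
    (∀ y, Real.log (p y / qstar y) = Real.log K) ∧
    (∀ q : 𝒴 → ℝ, (∀ y, 0 ≤ q y) → (∑ y, q y) = 1 →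
      (∃ y, K * q y ≤ p y) ∧ ((∀ y, 0 < q y) → ∃ y, Real.log K ≤ Real.log (p y / q y))) ∧
    IsLeast {r : ℝ | ∃ q : 𝒴 → ℝ, (∀ y, 0 < q y) ∧ (∑ y, q y) = 1 ∧
        r = ⨆ y, Real.log (p y / q y)}
      (Real.log K) := by
  have hKpos : 0 < K := hK ▸ Finset.sum_pos (fun y _ => hp y) Finset.univ_nonempty
  have hratio : ∀ y, p y / qstar y = K := by
    intro y
    rw [hqstar]
    field_simp
    exact div_self (hp y).ne'
  have hexists : ∀ q : 𝒴 → ℝ, (∀ y, 0 ≤ q y) → (∑ y, q y) = 1 → ∃ y, K * q y ≤ p y := by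
    intro q hq hsum
    by_contra h
    push_neg at h
    have : ∑ y, p y < ∑ y, K * q y :=
      Finset.sum_lt_sum_of_nonempty Finset.univ_nonempty (fun y _ => h y)
    rw [← Finset.mul_sum, hsum, mul_one, ← hK] at this
    exact lt_irrefl K this
  refine ⟨fun y => by rw [hratio], fun q hq hsum => ⟨hexists q hq hsum, ?_⟩, ?_, ?_⟩
  · intro hqpos
    obtain ⟨y, hy⟩ := hexists q (fun y => (hqpos y).le) hsum
    exact ⟨y, Real.log_le_log hKpos ((le_div_iff₀ (hqpos y)).mpr hy)⟩
  · refine ⟨qstar, fun y => by rw [hqstar]; exact div_pos (hp y) hKpos, ?_, ?_⟩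
    · rw [hqstar]
      simp only
      rw [← Finset.sum_div, ← hK, div_self hKpos.ne']
    · simp only [hratio]
      exact (ciSup_const).symm
  · rintro r ⟨q, hqpos, hsum, rfl⟩
    obtain ⟨y, hy⟩ := hexists q (fun y => (hqpos y).le) hsum
    have : Real.log K ≤ Real.log (p y / q y) :=
      Real.log_le_log hKpos ((le_div_iff₀ (hqpos y)).mpr hy)
    exact this.trans (le_ciSup (f := fun y => Real.log (p y / q y)) (Finite.bddAbove_range _) y)
end

section
/- For every λ > 0 and every x ∈ ℝ^M, one has x⊤(XᵀX + λI)⁻¹x ≤ x⊤X⁺(X⁺)ᵀx + (1/λ)·x⊤(I − X⁺X)x; equivalently, 1 + x⊤(XᵀX + λI)⁻¹x ≤ K₀ + ‖x_⊥‖²/λ where K₀ := 1 + x⊤X⁺(X⁺)ᵀx. -/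
open Matrix

/-- For every `λ > 0`, `xᵀ(XᵀX + λI)⁻¹x ≤ xᵀX⁺(X⁺)ᵀx + (1/λ)·xᵀ(I − X⁺X)x`; equivalently,
`1 + xᵀ(XᵀX + λI)⁻¹x ≤ K₀ + ‖x_⊥‖²/λ` where `K₀ = 1 + xᵀX⁺(X⁺)ᵀx`. -/
theorem ridge_quadratic_form_upper_bound {N M : ℕ}
    (X : Matrix (Fin N) (Fin M) ℝ)
    (hX : IsUnit (X * Xᵀ).det)
    (Xplus : Matrix (Fin M) (Fin N) ℝ) (hXplus : Xplus = Xᵀ * (X * Xᵀ)⁻¹)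
    (lam : ℝ) (hlam : 0 < lam) (x : Fin M → ℝ)
    (xperp : Fin M → ℝ)
    (hxperp : xperp = ((1 : Matrix (Fin M) (Fin M) ℝ) - Xplus * X).mulVec x)
    (K0 : ℝ) (hK0 : K0 = 1 + x ⬝ᵥ (Xplus * Xplusᵀ).mulVec x) :
    x ⬝ᵥ ((Xᵀ * X + lam • (1 : Matrix (Fin M) (Fin M) ℝ))⁻¹).mulVec x ≤
        x ⬝ᵥ (Xplus * Xplusᵀ).mulVec x +
          (1 / lam) * (x ⬝ᵥ ((1 : Matrix (Fin M) (Fin M) ℝ) - Xplus * X).mulVec x) ∧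
    1 + x ⬝ᵥ ((Xᵀ * X + lam • (1 : Matrix (Fin M) (Fin M) ℝ))⁻¹).mulVec x ≤
        K0 + (xperp ⬝ᵥ xperp) / lam := by
  subst hxperp hK0
  set A := X * Xᵀ with hA
  have hAinv : A * A⁻¹ = 1 := mul_nonsing_inv A hX
  have hAinv' : A⁻¹ * A = 1 := nonsing_inv_mul A hX
  have hAsymm : Aᵀ = A := by rw [hA, transpose_mul, transpose_transpose]
  have hAinvsymm : (A⁻¹)ᵀ = A⁻¹ := by rw [transpose_nonsing_inv, hAsymm]
  have hApsd : A.PosSemidef := by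
    simpa using posSemidef_self_mul_conjTranspose X
  have hsm : (lam • (1 : Matrix (Fin N) (Fin N) ℝ)).PosDef := by
    exact Matrix.PosDef.one.smul hlam
  set B := A + lam • (1 : Matrix (Fin N) (Fin N) ℝ) with hB
  have hBpd : B.PosDef := Matrix.PosDef.posSemidef_add hApsd hsm
  have hBu : IsUnit B.det := isUnit_iff_isUnit_det B |>.mp hBpd.isUnit
  have hBinv : B * B⁻¹ = 1 := mul_nonsing_inv B hBu
  have hBinv' : B⁻¹ * B = 1 := nonsing_inv_mul B hBu
  set P : Matrix (Fin M) (Fin M) ℝ := Xplus * X with hP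
  have hPeq : P = Xᵀ * A⁻¹ * X := by rw [hP, hXplus]
  set E := Xᵀ * (B⁻¹ * A⁻¹) * X + (1/lam) • ((1 : Matrix (Fin M) (Fin M) ℝ) - P) with hE
  have hXP : Xᵀ * X * ((1 : Matrix (Fin M) (Fin M) ℝ) - P) = 0 := by
    have h0 : Xᵀ * X * (Xᵀ * A⁻¹ * X) = Xᵀ * X := by
      calc Xᵀ * X * (Xᵀ * A⁻¹ * X) = Xᵀ * (X * Xᵀ * A⁻¹) * X := by
            simp only [Matrix.mul_assoc]
        _ = Xᵀ * X := by rw [← hA, hAinv, Matrix.mul_one]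
    rw [Matrix.mul_sub, Matrix.mul_one, hPeq, h0, sub_self]
  have hSE : (Xᵀ * X + lam • (1 : Matrix (Fin M) (Fin M) ℝ)) * E = 1 := by
    rw [hE, Matrix.mul_add, Matrix.add_mul, Matrix.add_mul]
    have e1 : Xᵀ * X * (Xᵀ * (B⁻¹ * A⁻¹) * X) = Xᵀ * (A * (B⁻¹ * A⁻¹)) * X := by
      calc Xᵀ * X * (Xᵀ * (B⁻¹ * A⁻¹) * X) = Xᵀ * (X * Xᵀ * (B⁻¹ * A⁻¹)) * X := by
            simp only [Matrix.mul_assoc]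
        _ = Xᵀ * (A * (B⁻¹ * A⁻¹)) * X := by rw [← hA]
    have e2 : (lam • (1 : Matrix (Fin M) (Fin M) ℝ)) * (Xᵀ * (B⁻¹ * A⁻¹) * X)
        = Xᵀ * ((lam • (1 : Matrix (Fin N) (Fin N) ℝ)) * (B⁻¹ * A⁻¹)) * X := by
      simp [Matrix.smul_mul, Matrix.mul_smul, Matrix.mul_assoc]
    have e3 : (lam • (1 : Matrix (Fin M) (Fin M) ℝ)) * ((1/lam) • ((1 : Matrix (Fin M) (Fin M) ℝ) - P))
        = 1 - P := by
      rw [Matrix.smul_mul, Matrix.mul_smul, smul_smul, Matrix.one_mul,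
        mul_one_div, div_self hlam.ne', one_smul]
    have e4 : Xᵀ * X * ((1/lam) • ((1 : Matrix (Fin M) (Fin M) ℝ) - P)) = 0 := by
      rw [Matrix.mul_smul, hXP, smul_zero]
    rw [e1, e2, e3, e4]
    have e5 : Xᵀ * (A * (B⁻¹ * A⁻¹)) * X + Xᵀ * ((lam • (1 : Matrix (Fin N) (Fin N) ℝ)) * (B⁻¹ * A⁻¹)) * X
        = Xᵀ * A⁻¹ * X := by
      rw [← Matrix.add_mul, ← Matrix.mul_add, ← Matrix.add_mul, ← hB,
        ← Matrix.mul_assoc B B⁻¹ A⁻¹, hBinv, Matrix.one_mul]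
    rw [e5, zero_add, ← hPeq]
    abel
  have hInvEq : (Xᵀ * X + lam • (1 : Matrix (Fin M) (Fin M) ℝ))⁻¹ = E :=
    inv_eq_right_inv hSE
  have hXpXpT : Xplus * Xplusᵀ = Xᵀ * (A⁻¹ * A⁻¹) * X := by
    rw [hXplus, transpose_mul, transpose_transpose, hAinvsymm]
    simp only [Matrix.mul_assoc]
  have hdiff : Xᵀ * (A⁻¹ * A⁻¹) * X - Xᵀ * (B⁻¹ * A⁻¹) * X
      = lam • ((A⁻¹ * X)ᵀ * B⁻¹ * (A⁻¹ * X)) := by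
    rw [transpose_mul, hAinvsymm]
    have h7 : A⁻¹ * (B - A) * B⁻¹ = A⁻¹ - B⁻¹ := by
      rw [Matrix.mul_sub, Matrix.sub_mul, Matrix.mul_assoc, hBinv, Matrix.mul_one,
        hAinv', Matrix.one_mul]
    have h6 : A⁻¹ - B⁻¹ = lam • (A⁻¹ * B⁻¹) := by
      rw [← h7, hB]
      simp [Matrix.mul_smul, Matrix.smul_mul, Matrix.mul_assoc]
    have key : A⁻¹ * A⁻¹ - B⁻¹ * A⁻¹ = lam • (A⁻¹ * B⁻¹ * A⁻¹) := by
      rw [← Matrix.sub_mul, h6, Matrix.smul_mul]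
    calc Xᵀ * (A⁻¹ * A⁻¹) * X - Xᵀ * (B⁻¹ * A⁻¹) * X
        = Xᵀ * (A⁻¹ * A⁻¹ - B⁻¹ * A⁻¹) * X := by
          rw [Matrix.mul_sub, Matrix.sub_mul]
      _ = lam • (Xᵀ * A⁻¹ * B⁻¹ * (A⁻¹ * X)) := by
          rw [key, Matrix.mul_smul, Matrix.smul_mul]
          congr 1
          simp only [Matrix.mul_assoc]
  have h8 : ((A⁻¹ * X)ᵀ * B⁻¹ * (A⁻¹ * X)).PosSemidef := by
    have := hBpd.inv.posSemidef.conjTranspose_mul_mul_same (A⁻¹ * X)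
    simpa using this
  have hquad : x ⬝ᵥ (Xᵀ * (B⁻¹ * A⁻¹) * X).mulVec x ≤ x ⬝ᵥ (Xᵀ * (A⁻¹ * A⁻¹) * X).mulVec x := by
    have h9 : (0:ℝ) ≤ x ⬝ᵥ (Xᵀ * (A⁻¹ * A⁻¹) * X - Xᵀ * (B⁻¹ * A⁻¹) * X).mulVec x := by
      rw [hdiff, smul_mulVec, dotProduct_smul, smul_eq_mul]
      have := h8.dotProduct_mulVec_nonneg x
      exact mul_nonneg hlam.le (by simpa using this)
    rw [sub_mulVec, dotProduct_sub] at h9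
    linarith
  have hEform : x ⬝ᵥ E.mulVec x = x ⬝ᵥ (Xᵀ * (B⁻¹ * A⁻¹) * X).mulVec x
      + (1/lam) * (x ⬝ᵥ ((1 : Matrix (Fin M) (Fin M) ℝ) - P).mulVec x) := by
    rw [hE, add_mulVec, dotProduct_add, smul_mulVec, dotProduct_smul, smul_eq_mul]
  have hPsymm : Pᵀ = P := by
    rw [hPeq, transpose_mul, transpose_mul, transpose_transpose, hAinvsymm, Matrix.mul_assoc]
  have hPidem : P * P = P := by
    rw [hPeq]
    calc Xᵀ * A⁻¹ * X * (Xᵀ * A⁻¹ * X) = Xᵀ * A⁻¹ * (X * Xᵀ) * (A⁻¹ * X) := by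
          simp only [Matrix.mul_assoc]
      _ = Xᵀ * A⁻¹ * X := by
          rw [← hA, Matrix.mul_assoc Xᵀ A⁻¹ A, hAinv', Matrix.mul_one, Matrix.mul_assoc]
  have h10 : ((1 : Matrix (Fin M) (Fin M) ℝ) - P)ᵀ * ((1 : Matrix (Fin M) (Fin M) ℝ) - P)
      = (1 : Matrix (Fin M) (Fin M) ℝ) - P := by
    simp only [transpose_sub, transpose_one, hPsymm, Matrix.mul_sub, Matrix.sub_mul,
      Matrix.one_mul, Matrix.mul_one, hPidem]
    abel
  have hperp : ((1 : Matrix (Fin M) (Fin M) ℝ) - P).mulVec x ⬝ᵥ ((1 : Matrix (Fin M) (Fin M) ℝ) - P).mulVec x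
      = x ⬝ᵥ ((1 : Matrix (Fin M) (Fin M) ℝ) - P).mulVec x := by
    conv_rhs => rw [← h10, ← mulVec_mulVec, dotProduct_mulVec, vecMul_transpose]
  have main : x ⬝ᵥ ((Xᵀ * X + lam • (1 : Matrix (Fin M) (Fin M) ℝ))⁻¹).mulVec x ≤
      x ⬝ᵥ (Xplus * Xplusᵀ).mulVec x +
        (1 / lam) * (x ⬝ᵥ ((1 : Matrix (Fin M) (Fin M) ℝ) - P).mulVec x) := by
    rw [hInvEq, hEform, hXpXpT]
    linarith [hquad]
  refine ⟨main, ?_⟩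
  have h12 : ((1 : Matrix (Fin M) (Fin M) ℝ) - P).mulVec x ⬝ᵥ ((1 : Matrix (Fin M) (Fin M) ℝ) - P).mulVec x / lam
      = (1/lam) * (x ⬝ᵥ ((1 : Matrix (Fin M) (Fin M) ℝ) - P).mulVec x) := by
    rw [hperp]; ring
  rw [h12]
  linarith [main]
end

section
/- Assume x_⊥ ≠ 0 (so X₊X₊ᵀ is invertible). For every y ∈ ℝ, the minimum-norm least-squares solution on the augmented data satisfies the recursion X₊ᵀ(X₊X₊ᵀ)⁻¹ Y₊(y) = θ_MN + (x_⊥/‖x_⊥‖²)·(y − x⊤θ_MN). -/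
open Matrix

/-- Recursion for the minimum-norm least-squares solution on the augmented data:
`θ_{N+1} = θ_MN + (x_⊥/‖x_⊥‖²)·(y − xᵀθ_MN)`. -/
theorem mn_solution_recursion {N M : ℕ}
    (X : Matrix (Fin N) (Fin M) ℝ) (Y : Fin N → ℝ) (x : Fin M → ℝ)
    (hX : IsUnit (X * Xᵀ).det)
    (Xplus : Matrix (Fin M) (Fin N) ℝ) (hXplus : Xplus = Xᵀ * (X * Xᵀ)⁻¹)
    (θMN : Fin M → ℝ) (hθMN : θMN = Xplus.mulVec Y)
    (xperp : Fin M → ℝ)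
    (hxperp : xperp = ((1 : Matrix (Fin M) (Fin M) ℝ) - Xplus * X).mulVec x)
    (hxperp_ne : xperp ≠ 0)
    (Xp : Matrix (Fin (N + 1)) (Fin M) ℝ) (hXp : Xp = Matrix.of (Fin.snoc X x))
    (y : ℝ) :
    (Xpᵀ * (Xp * Xpᵀ)⁻¹).mulVec (Fin.snoc Y y) =
      θMN + ((y - x ⬝ᵥ θMN) / (xperp ⬝ᵥ xperp)) • xperp := by
  have hSS : (X * Xᵀ) * (X * Xᵀ)⁻¹ = 1 := Matrix.mul_nonsing_inv _ hX
  have hSS' : (X * Xᵀ)⁻¹ * (X * Xᵀ) = 1 := Matrix.nonsing_inv_mul _ hX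
  -- X θ = Y
  have hXθ : X *ᵥ θMN = Y := by
    rw [hθMN, hXplus, mulVec_mulVec, ← Matrix.mul_assoc, hSS, Matrix.one_mulVec]
  -- X xperp = 0
  have hXperp : X *ᵥ xperp = 0 := by
    rw [hxperp, mulVec_mulVec, Matrix.mul_sub, Matrix.mul_one, hXplus,
      ← Matrix.mul_assoc, ← Matrix.mul_assoc, hSS, Matrix.one_mul, sub_self,
      Matrix.zero_mulVec]
  -- anything in the row space of X is orthogonal to xperp
  have hperp : ∀ z : Fin N → ℝ, (Xᵀ *ᵥ z) ⬝ᵥ xperp = 0 := by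
    intro z
    calc (Xᵀ *ᵥ z) ⬝ᵥ xperp = xperp ⬝ᵥ (Xᵀ *ᵥ z) := dotProduct_comm _ _
      _ = (xperp ᵥ* Xᵀ) ⬝ᵥ z := dotProduct_mulVec _ _ _
      _ = (X *ᵥ xperp) ⬝ᵥ z := by rw [vecMul_transpose]
      _ = 0 := by rw [hXperp, zero_dotProduct]
  -- x ⬝ xperp = xperp ⬝ xperp
  have hxx : x ⬝ᵥ xperp = xperp ⬝ᵥ xperp := by
    have h1 : xperp = x - Xᵀ *ᵥ (((X * Xᵀ)⁻¹ * X) *ᵥ x) := by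
      rw [hxperp, Matrix.sub_mulVec, Matrix.one_mulVec, hXplus, mulVec_mulVec,
        Matrix.mul_assoc]
    nth_rewrite 2 [h1]
    rw [sub_dotProduct, hperp, sub_zero]
  have hdd : xperp ⬝ᵥ xperp ≠ 0 := fun h => hxperp_ne (dotProduct_self_eq_zero.mp h)
  set t : ℝ := (y - x ⬝ᵥ θMN) / (xperp ⬝ᵥ xperp) with ht
  set v : Fin M → ℝ := θMN + t • xperp with hv
  -- x ⬝ v = y
  have hxv : x ⬝ᵥ v = y := by
    rw [hv, dotProduct_add, dotProduct_smul, smul_eq_mul, hxx, ht,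
      div_mul_cancel₀ _ hdd]
    ring
  -- Xp v = snoc Y y
  have hXpv : Xp *ᵥ v = Fin.snoc Y y := by
    have hXv : X *ᵥ v = Y := by
      rw [hv, mulVec_add, mulVec_smul, hXθ, hXperp, smul_zero, add_zero]
    funext i
    refine Fin.lastCases ?_ (fun i => ?_) i
    · simpa [hXp, Matrix.mulVec, Fin.snoc] using hxv
    · have := congrFun hXv i
      simpa [hXp, Matrix.mulVec, Fin.snoc] using this
  -- the witness vector
  set u : Fin N → ℝ := (X * Xᵀ)⁻¹ *ᵥ (Y - t • (X *ᵥ x)) with hu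
  set w : Fin (N + 1) → ℝ := Fin.snoc u t with hw
  -- Xpᵀ w = v
  have hsnocT : ∀ (z : Fin N → ℝ) (c : ℝ),
      Xpᵀ *ᵥ (Fin.snoc z c) = Xᵀ *ᵥ z + c • x := by
    intro z c
    funext j
    simp [hXp, Matrix.mulVec, dotProduct, Fin.snoc, Fin.sum_univ_castSucc,
      mul_comm]
  have hXpTw : Xpᵀ *ᵥ w = v := by
    rw [hw, hsnocT]
    have : Xᵀ *ᵥ u = θMN - t • (Xᵀ *ᵥ ((X * Xᵀ)⁻¹ *ᵥ (X *ᵥ x))) := by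
      rw [hu, Matrix.mulVec_sub, Matrix.mulVec_smul, Matrix.mulVec_sub,
        Matrix.mulVec_smul, hθMN, hXplus, mulVec_mulVec]
    rw [this]
    have h2 : xperp = x - Xᵀ *ᵥ ((X * Xᵀ)⁻¹ *ᵥ (X *ᵥ x)) := by
      rw [hxperp, Matrix.sub_mulVec, Matrix.one_mulVec, hXplus, mulVec_mulVec,
        Matrix.mul_assoc]
      simp [← mulVec_mulVec]
    rw [hv, h2]
    module
  -- hence snoc Y y = (Xp * Xpᵀ) w
  have hAw : (Xp * Xpᵀ) *ᵥ w = Fin.snoc Y y := by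
    rw [← mulVec_mulVec, hXpTw, hXpv]
  -- Xp * Xpᵀ is invertible
  have hA : IsUnit (Xp * Xpᵀ).det := by
    rw [isUnit_iff_ne_zero]
    intro h0
    obtain ⟨z, hz, hz0⟩ := Matrix.exists_mulVec_eq_zero_iff.mpr h0
    have h1 : (Xpᵀ *ᵥ z) ⬝ᵥ (Xpᵀ *ᵥ z) = 0 := by
      nth_rewrite 1 [mulVec_transpose]
      rw [← dotProduct_mulVec, mulVec_mulVec, hz0, dotProduct_zero]
    have h2 : Xpᵀ *ᵥ z = 0 := dotProduct_self_eq_zero.mp h1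
    have hzsnoc : Fin.snoc (Fin.init z) (z (Fin.last N)) = z := Fin.snoc_init_self z
    rw [← hzsnoc, hsnocT] at h2
    have h3 : (Xᵀ *ᵥ Fin.init z) ⬝ᵥ xperp + z (Fin.last N) * (x ⬝ᵥ xperp) = 0 := by
      have := congrArg (· ⬝ᵥ xperp) h2
      simpa [add_dotProduct, smul_dotProduct, smul_eq_mul] using this
    rw [hperp, zero_add, hxx] at h3
    have hc : z (Fin.last N) = 0 := by
      rcases mul_eq_zero.mp h3 with h | h
      · exact h
      · exact absurd h hdd
    rw [hc, zero_smul, add_zero] at h2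
    have h4 : Fin.init z = 0 := by
      have h5 : (X * Xᵀ) *ᵥ Fin.init z = 0 := by
        rw [← mulVec_mulVec, h2, Matrix.mulVec_zero]
      have := congrArg ((X * Xᵀ)⁻¹ *ᵥ ·) h5
      simpa [mulVec_mulVec, hSS', Matrix.one_mulVec] using this
    apply hz
    rw [← hzsnoc, h4, hc]
    funext i
    refine Fin.lastCases ?_ (fun i => ?_) i <;> simp
  -- conclude
  have hinv : (Xp * Xpᵀ)⁻¹ *ᵥ Fin.snoc Y y = w := by
    rw [← hAw, mulVec_mulVec, Matrix.nonsing_inv_mul _ hA, Matrix.one_mulVec]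
  rw [← mulVec_mulVec, hinv, hXpTw, hv]
end

section
/- Assume x_⊥ ≠ 0 (so X₊X₊ᵀ is invertible), and set c⁺ := x_⊥/‖x_⊥‖² ∈ ℝ^M. Then the pseudo-inverse of the augmented data matrix satisfies the rank-one (Greville) update: X₊⁺ := X₊ᵀ(X₊X₊ᵀ)⁻¹ equals the M×(N+1) block matrix [X⁺ − c⁺·(x⊤X⁺) | c⁺], i.e. its first N columns are X⁺ − c⁺ x⊤X⁺ and its last column is c⁺. -/
open Matrix

/-- Greville rank-one update of the pseudo-inverse: the pseudo-inverse of the augmented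
data matrix `X₊` has first `N` columns `X⁺ − c⁺·(xᵀX⁺)` and last column `c⁺ = x_⊥/‖x_⊥‖²`. -/
theorem greville_pseudoinverse_update {N M : ℕ}
    (X : Matrix (Fin N) (Fin M) ℝ) (x : Fin M → ℝ)
    (hX : IsUnit (X * Xᵀ).det)
    (Xplus : Matrix (Fin M) (Fin N) ℝ) (hXplus : Xplus = Xᵀ * (X * Xᵀ)⁻¹)
    (xperp : Fin M → ℝ)
    (hxperp : xperp = ((1 : Matrix (Fin M) (Fin M) ℝ) - Xplus * X).mulVec x)
    (hxperp_ne : xperp ≠ 0)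
    (cplus : Fin M → ℝ) (hcplus : cplus = (xperp ⬝ᵥ xperp)⁻¹ • xperp)
    (Xp : Matrix (Fin (N + 1)) (Fin M) ℝ) (hXp : Xp = Matrix.of (Fin.snoc X x)) :
    Xpᵀ * (Xp * Xpᵀ)⁻¹ =
      Matrix.of (fun i : Fin M =>
        Fin.snoc ((Xplus - vecMulVec cplus (Matrix.vecMul x Xplus)) i) (cplus i)) := by
  set B : Matrix (Fin M) (Fin (N + 1)) ℝ :=
    Matrix.of (fun i : Fin M =>
      Fin.snoc ((Xplus - vecMulVec cplus (Matrix.vecMul x Xplus)) i) (cplus i)) with hBdef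
  set K := (X * Xᵀ)⁻¹ with hKdef
  set a := X *ᵥ x with hadef
  set k := xperp ⬝ᵥ xperp with hkdef
  -- basic facts
  have hXXp : X * Xplus = 1 := by
    rw [hXplus, ← Matrix.mul_assoc, Matrix.mul_nonsing_inv _ hX]
  have hxperp' : xperp = x - Xplus *ᵥ a := by
    rw [hxperp, Matrix.sub_mulVec, Matrix.one_mulVec, hadef, Matrix.mulVec_mulVec]
  have hXxperp : X *ᵥ xperp = 0 := by
    rw [hxperp', Matrix.mulVec_sub, Matrix.mulVec_mulVec, hXXp, Matrix.one_mulVec, sub_self]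
  have hXc : X *ᵥ cplus = 0 := by
    rw [hcplus, Matrix.mulVec_smul, hXxperp, smul_zero]
  have hxxperp : x ⬝ᵥ xperp = k := by
    have h2 : (Xplus *ᵥ a) ⬝ᵥ xperp = 0 := by
      rw [dotProduct_comm, hXplus, ← Matrix.mulVec_mulVec,
        Matrix.dotProduct_mulVec, Matrix.vecMul_transpose, hXxperp, zero_dotProduct]
    rw [hkdef]
    rw [hxperp'] at h2 ⊢
    rw [sub_dotProduct, h2, sub_zero]
  have hk0 : k ≠ 0 := fun h => hxperp_ne (dotProduct_self_eq_zero.mp h)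
  have hxc : x ⬝ᵥ cplus = 1 := by
    rw [hcplus, dotProduct_smul, hxxperp, smul_eq_mul, inv_mul_cancel₀ hk0]
  have ht : x ᵥ* Xplus = a ᵥ* K := by
    rw [hXplus, ← Matrix.vecMul_vecMul, Matrix.vecMul_transpose]
  -- the candidate inverse of Xp * Xpᵀ
  set w : Fin (N + 1) → ℝ := Fin.snoc (fun i => -(k⁻¹ * (K *ᵥ a) i)) k⁻¹ with hwdef
  set E : Matrix (Fin (N + 1)) (Fin N) ℝ :=
    Matrix.of (Fin.snoc (fun i' j' => K i' j') (fun _ => (0 : ℝ))) with hEdef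
  set C : Matrix (Fin (N + 1)) (Fin (N + 1)) ℝ :=
    Matrix.of (fun i => Fin.snoc
      (fun j => E i j - w i * (a ᵥ* K) j)
      (w i)) with hCdef
  -- entries of B
  have hB1 : ∀ (m : Fin M) (j : Fin N),
      B m j.castSucc = Xplus m j - cplus m * (x ᵥ* Xplus) j := by
    intro m j
    simp [hBdef, Matrix.vecMulVec_apply, Matrix.sub_apply]
  have hB2 : ∀ m : Fin M, B m (Fin.last N) = cplus m := by
    intro m; simp [hBdef]
  -- key sum identity
  have hw : ∀ m : Fin M,
      (∑ i : Fin N, X i m * w i.castSucc) + x m * w (Fin.last N) = cplus m := by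
    intro m
    have hS : (Xplus *ᵥ a) m = ∑ i : Fin N, X i m * (K *ᵥ a) i := by
      rw [hXplus, ← Matrix.mulVec_mulVec]
      simp [Matrix.mulVec, dotProduct, Matrix.transpose_apply]
    have h2 : cplus m = k⁻¹ * (x m - ∑ i : Fin N, X i m * (K *ᵥ a) i) := by
      rw [hcplus]
      simp [hxperp', Pi.smul_apply, Pi.sub_apply, smul_eq_mul, hS]
    have h1 : ∑ i : Fin N, X i m * -(k⁻¹ * (K *ᵥ a) i)
        = -(k⁻¹ * ∑ i : Fin N, X i m * (K *ᵥ a) i) := by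
      rw [Finset.mul_sum, ← Finset.sum_neg_distrib]
      exact Finset.sum_congr rfl fun i _ => by ring
    simp only [hwdef, Fin.snoc_castSucc, Fin.snoc_last]
    rw [h1, h2]
    ring
  -- B = Xpᵀ * C
  have hBC : B = Xpᵀ * C := by
    ext m j
    rw [Matrix.mul_apply, Fin.sum_univ_castSucc]
    simp only [Matrix.transpose_apply, hXp, Matrix.of_apply, Fin.snoc_castSucc, Fin.snoc_last, Fin.snoc_castSucc (α := fun _ => Fin M → ℝ) (p := X) (x := x), Fin.snoc_last (α := fun _ => Fin M → ℝ) (p := X) (x := x)]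
    induction j using Fin.lastCases with
    | last =>
      simp only [hCdef, Matrix.of_apply, Fin.snoc_castSucc, Fin.snoc_last, hB2]
      exact (hw m).symm
    | cast j =>
      simp only [hCdef, hEdef, Matrix.of_apply, Fin.snoc_castSucc, Fin.snoc_last, hB1]
      have hXplus_apply : Xplus m j = ∑ i : Fin N, X i m * K i j := by
        rw [hXplus, Matrix.mul_apply]
        simp [Matrix.transpose_apply]
      have hsum : ∑ i : Fin N, X i m * (K i j - w i.castSucc * (a ᵥ* K) j)
          = (∑ i : Fin N, X i m * K i j)
            - (∑ i : Fin N, X i m * w i.castSucc) * (a ᵥ* K) j := by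
        rw [Finset.sum_mul, ← Finset.sum_sub_distrib]
        exact Finset.sum_congr rfl fun i _ => by ring
      rw [hsum, hXplus_apply, ht]
      linear_combination ((a ᵥ* K) j) * (hw m)
  -- Xp * B = 1
  have hXpB : Xp * B = 1 := by
    ext i j
    rw [Matrix.mul_apply, Matrix.one_apply]
    have hcol : ∀ (r : Fin M → ℝ) (j' : Fin N),
        ∑ m, r m * B m j'.castSucc
          = (∑ m, r m * Xplus m j') - (∑ m, r m * cplus m) * (x ᵥ* Xplus) j' := by
      intro r j'
      simp only [hB1]
      rw [Finset.sum_mul, ← Finset.sum_sub_distrib]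
      exact Finset.sum_congr rfl fun m _ => by ring
    induction i using Fin.lastCases with
    | last =>
      simp only [hXp, Matrix.of_apply, Fin.snoc_last, Fin.snoc_last (α := fun _ => Fin M → ℝ) (p := X) (x := x)]
      induction j using Fin.lastCases with
      | last =>
        simp only [hB2, if_pos rfl]
        simpa [dotProduct] using hxc
      | cast j' =>
        rw [hcol x j']
        have e1 : ∑ m, x m * Xplus m j' = (x ᵥ* Xplus) j' := by
          simp [Matrix.vecMul, dotProduct]
        have e2 : ∑ m, x m * cplus m = 1 := by
          simpa [dotProduct] using hxc
        rw [e1, e2, one_mul, sub_self, if_neg (Fin.castSucc_lt_last j').ne']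
    | cast i' =>
      simp only [hXp, Matrix.of_apply, Fin.snoc_castSucc, Fin.snoc_castSucc (α := fun _ => Fin M → ℝ) (p := X) (x := x)]
      have e2 : ∑ m, X i' m * cplus m = 0 := by
        have := congrFun hXc i'
        simpa [Matrix.mulVec, dotProduct] using this
      induction j using Fin.lastCases with
      | last =>
        simp only [hB2]
        rw [e2, if_neg (Fin.castSucc_lt_last i').ne]
      | cast j' =>
        rw [hcol (X i') j', e2, zero_mul, sub_zero]
        have e1 : ∑ m, X i' m * Xplus m j' = (1 : Matrix (Fin N) (Fin N) ℝ) i' j' := by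
          rw [← hXXp, Matrix.mul_apply]
        rw [e1, Matrix.one_apply]
        simp [Fin.castSucc_inj]
  -- conclude
  have hinv : (Xp * Xpᵀ)⁻¹ = C := by
    apply Matrix.inv_eq_right_inv
    rw [Matrix.mul_assoc, ← hBC, hXpB]
  rw [hinv, ← hBC]
end

section
/- For every λ ≥ 0, the ridge solution θ_λ := Xᵀ(X Xᵀ + λI)⁻¹Y satisfies the first-order (tangent-line) lower bound ‖θ_λ‖² ≥ ‖θ_MN‖² − 2λ·θ_MN⊤X⁺(X⁺)ᵀθ_MN. -/
open Matrix

private lemma dp_helper {N M : ℕ} (P Q : Matrix (Fin M) (Fin N) ℝ) (u v : Fin N → ℝ) :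
    (P *ᵥ u) ⬝ᵥ (Q *ᵥ v) = u ⬝ᵥ ((Pᵀ * Q) *ᵥ v) := by
  rw [← mulVec_mulVec, dotProduct_mulVec u, ← vecMul_transpose]

/-- Tangent-line lower bound for the squared norm of the ridge solution:
`‖θ_λ‖² ≥ ‖θ_MN‖² − 2λ·θ_MNᵀX⁺(X⁺)ᵀθ_MN` for every `λ ≥ 0`. -/
theorem ridge_norm_tangent_bound {N M : ℕ}
    (X : Matrix (Fin N) (Fin M) ℝ) (Y : Fin N → ℝ)
    (hX : IsUnit (X * Xᵀ).det)
    (Xplus : Matrix (Fin M) (Fin N) ℝ) (hXplus : Xplus = Xᵀ * (X * Xᵀ)⁻¹)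
    (θMN : Fin M → ℝ) (hθMN : θMN = Xplus.mulVec Y)
    (lam : ℝ) (hlam : 0 ≤ lam)
    (θlam : Fin M → ℝ)
    (hθlam : θlam =
      (Xᵀ * (X * Xᵀ + lam • (1 : Matrix (Fin N) (Fin N) ℝ))⁻¹).mulVec Y) :
    θlam ⬝ᵥ θlam ≥ θMN ⬝ᵥ θMN - 2 * lam * (θMN ⬝ᵥ (Xplus * Xplusᵀ).mulVec θMN) := by
  set A : Matrix (Fin N) (Fin N) ℝ := X * Xᵀ with hA
  set B : Matrix (Fin N) (Fin N) ℝ := A + lam • (1 : Matrix (Fin N) (Fin N) ℝ) with hB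
  have hAT : Aᵀ = A := by rw [hA, transpose_mul, transpose_transpose]
  -- A is positive definite
  have hApsd : A.PosSemidef := by
    have := Matrix.posSemidef_self_mul_conjTranspose X
    rwa [conjTranspose_eq_transpose_of_trivial] at this
  have hApd : A.PosDef := by
    refine Matrix.PosDef.of_dotProduct_mulVec_pos hApsd.isHermitian (fun x hx => ?_)
    rcases lt_or_eq_of_le (hApsd.dotProduct_mulVec_nonneg x) with h | h
    · exact h
    · exfalso
      apply hx
      have hXx : Xᵀ *ᵥ x = 0 := by
        have h2 : (Xᵀ *ᵥ x) ⬝ᵥ (Xᵀ *ᵥ x) = 0 := by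
          rw [dp_helper, transpose_transpose, ← hA]
          simpa using h.symm
        exact (dotProduct_self_eq_zero).mp h2
      have hAx : A *ᵥ x = 0 := by
        rw [hA, ← mulVec_mulVec, hXx, mulVec_zero]
      calc x = (A⁻¹ * A) *ᵥ x := by rw [Matrix.nonsing_inv_mul A hX, one_mulVec]
        _ = A⁻¹ *ᵥ (A *ᵥ x) := by rw [mulVec_mulVec]
        _ = 0 := by rw [hAx, mulVec_zero]
  -- B is positive definite
  have hBsemi : (lam • (1 : Matrix (Fin N) (Fin N) ℝ)).PosSemidef := by
    rw [smul_one_eq_diagonal]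
    exact Matrix.PosSemidef.diagonal (fun _ => hlam)
  have hBpd : B.PosDef := hApd.add_posSemidef hBsemi
  have hBu : IsUnit B.det := hBpd.det_pos.ne'.isUnit
  have hBT : Bᵀ = B := hBpd.isHermitian
  have hAinvT : A⁻¹ᵀ = A⁻¹ := by rw [Matrix.transpose_nonsing_inv, hAT]
  have hAAinv : A * A⁻¹ = 1 := Matrix.mul_nonsing_inv A hX
  have hAinvA : A⁻¹ * A = 1 := Matrix.nonsing_inv_mul A hX
  have hBBinv : B * B⁻¹ = 1 := Matrix.mul_nonsing_inv B hBu
  have hBinvB : B⁻¹ * B = 1 := Matrix.nonsing_inv_mul B hBu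
  -- commutation of inverses
  have hcomm : A⁻¹ * B⁻¹ = B⁻¹ * A⁻¹ := by
    rw [← Matrix.mul_inv_rev, ← Matrix.mul_inv_rev]
    congr 1
    rw [hB, Matrix.mul_add, Matrix.add_mul, Matrix.mul_smul, Matrix.smul_mul,
      Matrix.mul_one, Matrix.one_mul]
  -- key matrix identity : B⁻¹ - A⁻¹ + lam•(A⁻¹*A⁻¹) = lam^2 • (A⁻¹ * B⁻¹ * A⁻¹)
  have hsub : A⁻¹ - B⁻¹ = lam • (A⁻¹ * B⁻¹) := by
    have h1 : A⁻¹ * B * B⁻¹ - A⁻¹ * A * B⁻¹ = A⁻¹ - B⁻¹ := by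
      rw [Matrix.mul_assoc, hBBinv, Matrix.mul_one, hAinvA, Matrix.one_mul]
    calc A⁻¹ - B⁻¹ = A⁻¹ * B * B⁻¹ - A⁻¹ * A * B⁻¹ := h1.symm
      _ = A⁻¹ * (B - A) * B⁻¹ := by rw [Matrix.mul_sub, Matrix.sub_mul]
      _ = lam • (A⁻¹ * B⁻¹) := by
          have hBA : B - A = lam • (1 : Matrix (Fin N) (Fin N) ℝ) := by rw [hB]; abel
          rw [hBA, Matrix.mul_smul, Matrix.smul_mul, Matrix.mul_one]
  have hkey : B⁻¹ - A⁻¹ + lam • (A⁻¹ * A⁻¹) = (lam ^ 2) • (A⁻¹ * (B⁻¹ * A⁻¹)) := by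
    have h2 : B⁻¹ - A⁻¹ + lam • (A⁻¹ * A⁻¹) = lam • (A⁻¹ * (A⁻¹ - B⁻¹)) := by
      rw [Matrix.mul_sub, smul_sub, ← hsub]
      abel
    rw [h2, hsub, Matrix.mul_smul, smul_smul, hcomm, sq]
  -- dot product computations
  have hθMNθMN : θMN ⬝ᵥ θMN = Y ⬝ᵥ (A⁻¹ *ᵥ Y) := by
    rw [hθMN, hXplus, dp_helper]
    congr 2
    rw [transpose_mul, hAinvT, transpose_transpose]
    rw [Matrix.mul_assoc, ← Matrix.mul_assoc X, ← hA, hAAinv, Matrix.mul_one]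
  have hθMNθlam : θMN ⬝ᵥ θlam = Y ⬝ᵥ (B⁻¹ *ᵥ Y) := by
    rw [hθMN, hθlam, hXplus, dp_helper]
    congr 2
    rw [transpose_mul, hAinvT, transpose_transpose]
    rw [Matrix.mul_assoc, ← Matrix.mul_assoc X, ← hA, ← Matrix.mul_assoc, hAinvA,
      Matrix.one_mul]
  have hquad : θMN ⬝ᵥ (Xplus * Xplusᵀ).mulVec θMN = Y ⬝ᵥ ((A⁻¹ * A⁻¹) *ᵥ Y) := by
    rw [hθMN, mulVec_mulVec, dp_helper]
    congr 2
    have hXX : ∀ Z : Matrix (Fin N) (Fin N) ℝ, X * (Xᵀ * Z) = A * Z := fun Z => by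
      rw [← Matrix.mul_assoc, ← hA]
    rw [hXplus, transpose_mul, hAinvT, transpose_transpose]
    simp only [Matrix.mul_assoc]
    rw [hXX, hXX, hAAinv, Matrix.mul_one, ← Matrix.mul_assoc A A⁻¹, hAAinv, Matrix.one_mul]
  -- nonnegativity pieces
  have hsq : 0 ≤ (θlam - θMN) ⬝ᵥ (θlam - θMN) := by
    have := dotProduct_star_self_nonneg (θlam - θMN)
    simpa using this
  have hexp : (θlam - θMN) ⬝ᵥ (θlam - θMN)
      = θlam ⬝ᵥ θlam - 2 * (θMN ⬝ᵥ θlam) + θMN ⬝ᵥ θMN := by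
    simp [sub_dotProduct, dotProduct_sub]
    rw [dotProduct_comm θlam θMN]
    ring
  have hpos : 0 ≤ Y ⬝ᵥ ((B⁻¹ - A⁻¹ + lam • (A⁻¹ * A⁻¹)) *ᵥ Y) := by
    rw [hkey]
    have : ((lam ^ 2) • (A⁻¹ * (B⁻¹ * A⁻¹))) *ᵥ Y = (lam ^ 2) • ((A⁻¹ * (B⁻¹ * A⁻¹)) *ᵥ Y) := by
      rw [Matrix.smul_mulVec]
    rw [this, dotProduct_smul]
    have h0 : Y ⬝ᵥ ((A⁻¹ * (B⁻¹ * A⁻¹)) *ᵥ Y) = (A⁻¹ *ᵥ Y) ⬝ᵥ (B⁻¹ *ᵥ (A⁻¹ *ᵥ Y)) := by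
      rw [mulVec_mulVec, dp_helper, hAinvT]
    have h1 : 0 ≤ (A⁻¹ *ᵥ Y) ⬝ᵥ (B⁻¹ *ᵥ (A⁻¹ *ᵥ Y)) := by
      have := hBpd.inv.posSemidef.dotProduct_mulVec_nonneg (A⁻¹ *ᵥ Y)
      simpa using this
    rw [h0]
    positivity
  -- conclude
  have hineq : θlam ⬝ᵥ θlam ≥ 2 * (θMN ⬝ᵥ θlam) - θMN ⬝ᵥ θMN := by linarith [hsq, hexp.symm.le]
  have hfinal : Y ⬝ᵥ ((B⁻¹ - A⁻¹ + lam • (A⁻¹ * A⁻¹)) *ᵥ Y)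
      = Y ⬝ᵥ (B⁻¹ *ᵥ Y) - Y ⬝ᵥ (A⁻¹ *ᵥ Y) + lam * (Y ⬝ᵥ ((A⁻¹ * A⁻¹) *ᵥ Y)) := by
    rw [Matrix.add_mulVec, Matrix.sub_mulVec, dotProduct_add, dotProduct_sub,
      Matrix.smul_mulVec, dotProduct_smul]
    simp [smul_eq_mul]
  rw [hθMNθlam, hθMNθMN] at hineq
  rw [hfinal] at hpos
  rw [hθMNθMN, hquad]
  linarith
end

section
/- Assume x_⊥ ≠ 0 (so X₊X₊ᵀ is invertible) and Y ≠ 0. Then for every y ∈ ℝ there exists λ ≥ 0 such that the ridge solution on the augmented data satisfies the norm constraint exactly: ‖X₊ᵀ(X₊X₊ᵀ + λI)⁻¹ Y₊(y)‖ = ‖θ_MN‖. -/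
open Matrix

lemma dot_self_nonneg' {n : ℕ} (v : Fin n → ℝ) : 0 ≤ v ⬝ᵥ v :=
  Finset.sum_nonneg fun _ _ => mul_self_nonneg _

lemma psd_dot {n m : ℕ} (P : Matrix (Fin n) (Fin m) ℝ) (v : Fin n → ℝ) :
    v ⬝ᵥ (P * Pᵀ) *ᵥ v = (Pᵀ *ᵥ v) ⬝ᵥ (Pᵀ *ᵥ v) := by
  rw [← mulVec_mulVec, dotProduct_mulVec]
  congr 1
  rw [← transpose_transpose P, vecMul_transpose, transpose_transpose]

lemma isUnit_det_of_ker {n : ℕ} (B : Matrix (Fin n) (Fin n) ℝ)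
    (h : ∀ v, B *ᵥ v = 0 → v = 0) : IsUnit B.det := by
  rw [isUnit_iff_ne_zero]
  intro hd
  obtain ⟨v, hv, hv0⟩ := Matrix.exists_mulVec_eq_zero_iff.mpr hd
  exact hv (h v hv0)

lemma norm_euclid_sq {n : ℕ} (v : Fin n → ℝ) :
    ‖(WithLp.equiv 2 (Fin n → ℝ)).symm v‖ ^ 2 = v ⬝ᵥ v := by
  rw [← real_inner_self_eq_norm_sq]
  simp [inner, dotProduct, mul_comm]

lemma inner_euclid {n : ℕ} (v w : Fin n → ℝ) :
    inner ℝ ((WithLp.equiv 2 (Fin n → ℝ)).symm v) ((WithLp.equiv 2 (Fin n → ℝ)).symm w)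
      = v ⬝ᵥ w := by
  simp [inner, dotProduct, mul_comm]

lemma isUnit_ridge {n m : ℕ} (Xp : Matrix (Fin n) (Fin m) ℝ)
    (hrows : ∀ v, v ᵥ* Xp = 0 → v = 0) {lam : ℝ} (hlam : 0 ≤ lam) :
    IsUnit (Xp * Xpᵀ + lam • (1 : Matrix (Fin n) (Fin n) ℝ)).det := by
  apply isUnit_det_of_ker
  intro v hv
  have h1 : v ⬝ᵥ (Xp * Xpᵀ + lam • (1 : Matrix (Fin n) (Fin n) ℝ)) *ᵥ v = 0 := by
    rw [hv, dotProduct_zero]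
  rw [add_mulVec, smul_mulVec, one_mulVec, dotProduct_add, dotProduct_smul,
    psd_dot] at h1
  have h2 : 0 ≤ (Xpᵀ *ᵥ v) ⬝ᵥ (Xpᵀ *ᵥ v) := dot_self_nonneg' _
  have h3 : 0 ≤ lam • (v ⬝ᵥ v) := smul_nonneg hlam (dot_self_nonneg' _)
  have h4 : (Xpᵀ *ᵥ v) ⬝ᵥ (Xpᵀ *ᵥ v) = 0 := by linarith
  have h5 : Xpᵀ *ᵥ v = 0 := dotProduct_self_eq_zero.mp h4
  apply hrows
  rw [← transpose_transpose Xp, vecMul_transpose, h5]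

lemma arith_cancel (C nYp c lam0 nw : ℝ) (hC : 0 ≤ C) (hc : 0 < c) (hl1 : 1 ≤ lam0)
    (hge : C * nYp ≤ lam0 * c) (hnw : 0 ≤ nw) (hkey : lam0 * nw ^ 2 ≤ nYp * nw) :
    C * nw ≤ c := by
  have hl0 : 0 < lam0 := lt_of_lt_of_le one_pos hl1
  rcases eq_or_lt_of_le hnw with h | h
  · rw [← h]; simpa using hc.le
  · have h5 : lam0 * nw ≤ nYp := by
      have h4 : lam0 * nw * nw ≤ nYp * nw := by nlinarith
      exact (mul_le_mul_iff_left₀ h).mp h4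
    have h6 : C * (lam0 * nw) ≤ C * nYp := mul_le_mul_of_nonneg_left h5 hC
    have h7 : lam0 * (C * nw) ≤ lam0 * c := by nlinarith
    exact (mul_le_mul_iff_right₀ hl0).mp h7

lemma rows_indep {N M : ℕ}
    (X : Matrix (Fin N) (Fin M) ℝ) (x : Fin M → ℝ)
    (hX : IsUnit (X * Xᵀ).det)
    (Xplus : Matrix (Fin M) (Fin N) ℝ) (hXplus : Xplus = Xᵀ * (X * Xᵀ)⁻¹)
    (xperp : Fin M → ℝ)
    (hxperp : xperp = ((1 : Matrix (Fin M) (Fin M) ℝ) - Xplus * X).mulVec x)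
    (hxperp_ne : xperp ≠ 0)
    (Xp : Matrix (Fin (N + 1)) (Fin M) ℝ) (hXp : Xp = Matrix.of (Fin.snoc X x))
    (v : Fin (N + 1) → ℝ) (hv : v ᵥ* Xp = 0) : v = 0 := by
  set a : Fin N → ℝ := fun i => v i.castSucc with ha
  set t : ℝ := v (Fin.last N) with ht
  have hsplit : a ᵥ* X + t • x = 0 := by
    funext j
    have := congrFun hv j
    simp only [vecMul, dotProduct, Fin.sum_univ_castSucc, hXp] at this
    have hs : ∀ (i : Fin N) (j : Fin M), Fin.snoc (α := fun _ => Fin M → ℝ) X x i.castSucc j = X i j :=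
      fun i j => congrFun (Fin.snoc_castSucc (α := fun _ => Fin M → ℝ) (p := X) (x := x) (i := i)) j
    have hl : ∀ (j : Fin M), Fin.snoc (α := fun _ => Fin M → ℝ) X x (Fin.last N) j = x j :=
      fun j => congrFun (Fin.snoc_last (α := fun _ => Fin M → ℝ) (p := X) (x := x)) j
    simpa [vecMul, dotProduct, Pi.add_apply, ha, ht, hs, hl] using this
  set P : Matrix (Fin M) (Fin M) ℝ := (1 : Matrix (Fin M) (Fin M) ℝ) - Xplus * X with hP
  have hXP : X * P = 0 := by
    have hXXplus : X * Xplus = 1 := by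
      rw [hXplus, ← Matrix.mul_assoc, Matrix.mul_nonsing_inv _ hX]
    rw [hP, Matrix.mul_sub, Matrix.mul_one, ← Matrix.mul_assoc, hXXplus, Matrix.one_mul,
      sub_self]
  have hPsymm : Pᵀ = P := by
    have h1 : (X * Xᵀ)ᵀ = X * Xᵀ := by simp [Matrix.transpose_mul]
    rw [hP, Matrix.transpose_sub, Matrix.transpose_one, Matrix.transpose_mul, hXplus]
    congr 1
    rw [Matrix.transpose_mul, Matrix.transpose_transpose, Matrix.transpose_nonsing_inv, h1,
      Matrix.mul_assoc]
  have hxP : x ᵥ* P = xperp := by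
    rw [← hPsymm, vecMul_transpose]; exact hxperp.symm
  have h0 : (a ᵥ* X + t • x) ᵥ* P = 0 := by rw [hsplit]; simp [vecMul]
  rw [Matrix.add_vecMul, vecMul_vecMul, hXP, Matrix.vecMul_zero, zero_add,
    Matrix.smul_vecMul, hxP] at h0
  have ht0 : t = 0 := by
    by_contra h
    exact hxperp_ne (by simpa [h] using smul_eq_zero.mp h0)
  have haX : a ᵥ* X = 0 := by simpa [ht0] using hsplit
  have ha0 : a = 0 := by
    have h2 : a ᵥ* (X * Xᵀ) = 0 := by rw [← vecMul_vecMul, haX, Matrix.zero_vecMul]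
    have h3 := congrArg (fun u => u ᵥ* (X * Xᵀ)⁻¹) h2
    simpa [vecMul_vecMul, Matrix.mul_nonsing_inv _ hX] using h3
  funext i
  refine Fin.lastCases ?_ ?_ i
  · simpa using ht0
  · intro i; simpa using congrFun ha0 i

/-- Existence of a regularization factor `λ ≥ 0` for which the ridge solution on the
augmented data meets the norm constraint `‖θ_λ‖ = ‖θ_MN‖` exactly. -/
theorem exists_lambda_norm_constraint {N M : ℕ}
    (X : Matrix (Fin N) (Fin M) ℝ) (Y : Fin N → ℝ) (x : Fin M → ℝ)
    (hX : IsUnit (X * Xᵀ).det)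
    (Xplus : Matrix (Fin M) (Fin N) ℝ) (hXplus : Xplus = Xᵀ * (X * Xᵀ)⁻¹)
    (θMN : Fin M → ℝ) (hθMN : θMN = Xplus.mulVec Y)
    (xperp : Fin M → ℝ)
    (hxperp : xperp = ((1 : Matrix (Fin M) (Fin M) ℝ) - Xplus * X).mulVec x)
    (hxperp_ne : xperp ≠ 0)
    (hY : Y ≠ 0)
    (Xp : Matrix (Fin (N + 1)) (Fin M) ℝ) (hXp : Xp = Matrix.of (Fin.snoc X x))
    (y : ℝ) :
    ∃ lam : ℝ, 0 ≤ lam ∧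
      ‖(WithLp.equiv 2 (Fin M → ℝ)).symm
          ((Xpᵀ * (Xp * Xpᵀ + lam • (1 : Matrix (Fin (N + 1)) (Fin (N + 1)) ℝ))⁻¹).mulVec
            (Fin.snoc Y y))‖ =
        ‖(WithLp.equiv 2 (Fin M → ℝ)).symm θMN‖ := by
  have hrows := rows_indep X x hX Xplus hXplus xperp hxperp hxperp_ne Xp hXp
  set Yp : Fin (N + 1) → ℝ := Fin.snoc Y y with hYp
  set A : ℝ → Matrix (Fin (N + 1)) (Fin (N + 1)) ℝ :=
    fun l => Xp * Xpᵀ + l • (1 : Matrix (Fin (N + 1)) (Fin (N + 1)) ℝ) with hA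
  have hAinv : ∀ l : ℝ, 0 ≤ l → IsUnit (A l).det := fun l hl => isUnit_ridge Xp hrows hl
  set g : ℝ → ℝ := fun l =>
    ‖(WithLp.equiv 2 (Fin M → ℝ)).symm ((Xpᵀ * (A l)⁻¹) *ᵥ Yp)‖ with hg
  set c : ℝ := ‖(WithLp.equiv 2 (Fin M → ℝ)).symm θMN‖ with hc
  -- X θMN = Y
  have hXθMN : X *ᵥ θMN = Y := by
    rw [hθMN, hXplus, mulVec_mulVec, ← Matrix.mul_assoc, Matrix.mul_nonsing_inv _ hX,
      one_mulVec]
  -- c > 0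
  have hθMN_ne : θMN ≠ 0 := by
    intro h
    apply hY
    rw [← hXθMN, h, mulVec_zero]
  have hcpos : 0 < c := by
    rw [hc, norm_pos_iff]
    intro h
    exact hθMN_ne (by simpa using congrArg (WithLp.equiv 2 (Fin M → ℝ)) h)
  -- the A 0 case
  have hA0 : A 0 = Xp * Xpᵀ := by simp [hA]
  have hB : IsUnit (Xp * Xpᵀ).det := by simpa [hA0] using hAinv 0 le_rfl
  -- g 0 ≥ c  (min-norm property)
  have hg0 : c ≤ g 0 := by
    set θ0 : Fin M → ℝ := (Xpᵀ * (A 0)⁻¹) *ᵥ Yp with hθ0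
    have hrow : ∀ i : Fin N, (X * Xpᵀ) i = (Xp * Xpᵀ) i.castSucc := by
      intro i
      funext k
      have hs : ∀ (i : Fin N) (j : Fin M), Fin.snoc (α := fun _ => Fin M → ℝ) X x i.castSucc j = X i j :=
        fun i j => congrFun (Fin.snoc_castSucc (α := fun _ => Fin M → ℝ) (p := X) (x := x) (i := i)) j
      have hl : ∀ (j : Fin M), Fin.snoc (α := fun _ => Fin M → ℝ) X x (Fin.last N) j = x j :=
        fun j => congrFun (Fin.snoc_last (α := fun _ => Fin M → ℝ) (p := X) (x := x)) j
      simp [Matrix.mul_apply, hXp, hs, hl]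
    have hXθ0 : X *ᵥ θ0 = Y := by
      have h1 : θ0 = Xpᵀ *ᵥ ((A 0)⁻¹ *ᵥ Yp) := by rw [hθ0, mulVec_mulVec]
      funext i
      have h2 : (X *ᵥ θ0) i = ((Xp * Xpᵀ) *ᵥ ((A 0)⁻¹ *ᵥ Yp)) i.castSucc := by
        rw [h1, mulVec_mulVec]
        show ((X * Xpᵀ) *ᵥ ((A 0)⁻¹ *ᵥ Yp)) i = _
        simp only [mulVec, hrow i]
      rw [h2, mulVec_mulVec, hA0, Matrix.mul_nonsing_inv _ hB, one_mulVec]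
      simp [hYp]
    set w : Fin M → ℝ := θ0 - θMN with hw
    have hXw : X *ᵥ w = 0 := by
      rw [hw, mulVec_sub, hXθ0, hXθMN, sub_self]
    have horth : θMN ⬝ᵥ w = 0 := by
      have h1 : θMN = Xᵀ *ᵥ ((X * Xᵀ)⁻¹ *ᵥ Y) := by rw [hθMN, hXplus, mulVec_mulVec]
      rw [h1, dotProduct_comm, dotProduct_mulVec, vecMul_transpose, hXw, zero_dotProduct]
    have hsum : θ0 = θMN + w := by rw [hw]; abel
    have hdots : θ0 ⬝ᵥ θ0 = θMN ⬝ᵥ θMN + w ⬝ᵥ w := by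
      rw [hsum, add_dotProduct, dotProduct_add, dotProduct_add, horth,
        dotProduct_comm w θMN, horth]
      ring
    have hsq : (g 0) ^ 2 = c ^ 2 + w ⬝ᵥ w := by
      rw [hg, hc, norm_euclid_sq, norm_euclid_sq]
      exact hdots
    nlinarith [norm_nonneg ((WithLp.equiv 2 (Fin M → ℝ)).symm ((Xpᵀ * (A 0)⁻¹) *ᵥ Yp)),
      dot_self_nonneg' w, hcpos]
  -- operator norm bound
  set T := (Matrix.toEuclideanLin (Xpᵀ)).toContinuousLinearMap with hT
  set C : ℝ := ‖T‖ with hCdef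
  have hCnn : 0 ≤ C := norm_nonneg T
  have hCbound : ∀ w : Fin (N + 1) → ℝ,
      ‖(WithLp.equiv 2 (Fin M → ℝ)).symm (Xpᵀ *ᵥ w)‖
        ≤ C * ‖(WithLp.equiv 2 (Fin (N + 1) → ℝ)).symm w‖ := by
    intro w
    have h1 := T.le_opNorm ((WithLp.equiv 2 (Fin (N + 1) → ℝ)).symm w)
    simpa [hT, Matrix.toEuclideanLin_apply] using h1
  set nYp : ℝ := ‖(WithLp.equiv 2 (Fin (N + 1) → ℝ)).symm Yp‖ with hnYp
  have hnYpnn : 0 ≤ nYp := norm_nonneg _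
  -- choose lam0
  set lam0 : ℝ := max 1 (C * nYp / c) with hlam0
  have hlam0pos : 0 < lam0 := lt_of_lt_of_le one_pos (le_max_left _ _)
  have hlam0nn : 0 ≤ lam0 := hlam0pos.le
  have hlam0ge : C * nYp ≤ lam0 * c := by
    have h1 : C * nYp / c ≤ lam0 := le_max_right _ _
    calc C * nYp = (C * nYp / c) * c := by field_simp
    _ ≤ lam0 * c := by exact mul_le_mul_of_nonneg_right h1 hcpos.le
  -- g lam0 ≤ c
  have hglam0 : g lam0 ≤ c := by
    set w : Fin (N + 1) → ℝ := (A lam0)⁻¹ *ᵥ Yp with hwdef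
    have hAw : A lam0 *ᵥ w = Yp := by
      rw [hwdef, mulVec_mulVec, Matrix.mul_nonsing_inv _ (hAinv lam0 hlam0nn), one_mulVec]
    set nw : ℝ := ‖(WithLp.equiv 2 (Fin (N + 1) → ℝ)).symm w‖ with hnw
    have hnwnn : 0 ≤ nw := norm_nonneg _
    have hkey : lam0 * nw ^ 2 ≤ nYp * nw := by
      have h1 : Yp ⬝ᵥ w = w ⬝ᵥ (Xp * Xpᵀ) *ᵥ w + lam0 * (w ⬝ᵥ w) := by
        rw [← hAw, dotProduct_comm, hA]
        rw [add_mulVec, smul_mulVec, one_mulVec, dotProduct_add, dotProduct_smul]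
        simp [smul_eq_mul]
      have h2 : 0 ≤ w ⬝ᵥ (Xp * Xpᵀ) *ᵥ w := by rw [psd_dot]; exact dot_self_nonneg' _
      have h3 : Yp ⬝ᵥ w ≤ nYp * nw := by
        rw [← inner_euclid Yp w]
        exact real_inner_le_norm _ _
      have h4 : nw ^ 2 = w ⬝ᵥ w := norm_euclid_sq w
      rw [h4]
      linarith [h1, h2, h3]
    have hgval : g lam0 ≤ C * nw := by
      have : (Xpᵀ * (A lam0)⁻¹) *ᵥ Yp = Xpᵀ *ᵥ w := by rw [hwdef, mulVec_mulVec]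
      rw [hg]
      show ‖(WithLp.equiv 2 (Fin M → ℝ)).symm ((Xpᵀ * (A lam0)⁻¹) *ᵥ Yp)‖ ≤ C * nw
      rw [this]
      exact hCbound w
    have hfin : C * nw ≤ c :=
      arith_cancel C nYp c lam0 nw hCnn hcpos (le_max_left _ _) hlam0ge hnwnn hkey
    linarith [hgval, hfin]
  -- continuity of g on [0, lam0]
  have hAcont : Continuous A := by
    rw [hA]
    exact continuous_const.add (continuous_id.smul continuous_const)
  have hdetne : ∀ l ∈ Set.Icc (0:ℝ) lam0, (A l).det ≠ 0 := by
    intro l hl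
    exact (isUnit_iff_ne_zero.mp (hAinv l hl.1))
  have hinvcont : ContinuousOn (fun l => (A l)⁻¹) (Set.Icc (0:ℝ) lam0) := by
    have h1 : ContinuousOn (fun l => (A l).det⁻¹) (Set.Icc (0:ℝ) lam0) :=
      (hAcont.matrix_det.continuousOn).inv₀ hdetne
    have h2 : ContinuousOn (fun l => (A l).adjugate) (Set.Icc (0:ℝ) lam0) :=
      hAcont.matrix_adjugate.continuousOn
    have h3 : ∀ l, (A l)⁻¹ = (A l).det⁻¹ • (A l).adjugate := by
      intro l
      rw [Matrix.inv_def, Ring.inverse_eq_inv']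
    exact (h1.smul h2).congr fun l _ => h3 l
  have hentry : ∀ (j k : Fin (N + 1)),
      ContinuousOn (fun l => (A l)⁻¹ j k) (Set.Icc (0:ℝ) lam0) := by
    intro j k
    exact ((continuous_apply k).comp (continuous_apply j)).comp_continuousOn hinvcont
  have hgcont : ContinuousOn g (Set.Icc (0:ℝ) lam0) := by
    have hcoord : ∀ i : Fin M,
        ContinuousOn (fun l => ((Xpᵀ * (A l)⁻¹) *ᵥ Yp) i) (Set.Icc (0:ℝ) lam0) := by
      intro i
      simp only [mulVec, dotProduct, Matrix.mul_apply]
      apply continuousOn_finset_sum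
      intro k _
      apply ContinuousOn.mul _ continuousOn_const
      apply continuousOn_finset_sum
      intro j _
      exact continuousOn_const.mul (hentry j k)
    have hrepr : ∀ l, g l = Real.sqrt (∑ i, ((Xpᵀ * (A l)⁻¹) *ᵥ Yp) i ^ 2) := by
      intro l
      rw [hg]
      show ‖(WithLp.equiv 2 (Fin M → ℝ)).symm ((Xpᵀ * (A l)⁻¹) *ᵥ Yp)‖ = _
      rw [EuclideanSpace.norm_eq]
      congr 1
      refine Finset.sum_congr rfl fun i _ => ?_
      rw [WithLp.equiv_symm_apply, PiLp.toLp_apply, Real.norm_eq_abs, sq_abs]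
    have : ContinuousOn (fun l => Real.sqrt (∑ i, ((Xpᵀ * (A l)⁻¹) *ᵥ Yp) i ^ 2))
        (Set.Icc (0:ℝ) lam0) := by
      apply Real.continuous_sqrt.comp_continuousOn
      apply continuousOn_finset_sum
      intro i _
      exact (hcoord i).pow 2
    exact this.congr fun l _ => hrepr l
  -- intermediate value theorem
  have hmem : c ∈ Set.Icc (g lam0) (g 0) := ⟨hglam0, hg0⟩
  obtain ⟨lam, hlam, hglam⟩ := intermediate_value_Icc' hlam0nn hgcont hmem
  exact ⟨lam, hlam.1, hglam⟩
end

section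
/- The norm of the ridge solution is nonincreasing in the regularization parameter: for all 0 ≤ λ₁ ≤ λ₂, ‖Xᵀ(X Xᵀ + λ₂I)⁻¹Y‖ ≤ ‖Xᵀ(X Xᵀ + λ₁I)⁻¹Y‖. -/
open Matrix

private lemma psd_smul' {n : ℕ} {M : Matrix (Fin n) (Fin n) ℝ} (hM : M.PosSemidef) {c : ℝ}
    (hc : 0 ≤ c) : (c • M).PosSemidef := by
  refine ⟨?_, fun x => ?_⟩
  · unfold Matrix.IsHermitian
    rw [conjTranspose_smul, hM.1]
    simp
  · exact (hM.smul hc).2 x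

private lemma comm_inv {n : ℕ} {A C : Matrix (Fin n) (Fin n) ℝ} (hC : IsUnit C.det)
    (h : A * C = C * A) : A * C⁻¹ = C⁻¹ * A := by
  have h1 := Matrix.mul_nonsing_inv C hC
  have h2 := Matrix.nonsing_inv_mul C hC
  calc A * C⁻¹ = C⁻¹ * C * (A * C⁻¹) := by rw [h2, one_mul]
    _ = C⁻¹ * (C * A) * C⁻¹ := by simp only [mul_assoc]
    _ = C⁻¹ * (A * C) * C⁻¹ := by rw [← h]
    _ = C⁻¹ * A * (C * C⁻¹) := by simp only [mul_assoc]
    _ = C⁻¹ * A := by rw [h1, mul_one]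

private lemma swapl {n : ℕ} {a b : Matrix (Fin n) (Fin n) ℝ} (h : a * b = b * a)
    (c : Matrix (Fin n) (Fin n) ℝ) : b * (a * c) = a * (b * c) := by
  rw [← mul_assoc, ← h, mul_assoc]

private lemma quad_eq' {N M : ℕ} (X : Matrix (Fin N) (Fin M) ℝ) (Y : Fin N → ℝ)
    (B : Matrix (Fin N) (Fin N) ℝ) (hB : Bᵀ = B) :
    ((Xᵀ * B) *ᵥ Y) ⬝ᵥ ((Xᵀ * B) *ᵥ Y) = Y ⬝ᵥ ((B * (X * Xᵀ) * B) *ᵥ Y) := by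
  rw [← mulVec_mulVec]
  set u := B *ᵥ Y with hu
  have h1 : (Xᵀ *ᵥ u) ⬝ᵥ (Xᵀ *ᵥ u) = u ⬝ᵥ ((X * Xᵀ) *ᵥ u) := by
    rw [dotProduct_mulVec, vecMul_transpose, mulVec_mulVec, dotProduct_comm]
  rw [h1, hu]
  have h2 : B *ᵥ Y = Y ᵥ* B := by rw [← hB, mulVec_transpose, hB]
  nth_rewrite 1 [h2]
  rw [← dotProduct_mulVec, mulVec_mulVec, mulVec_mulVec]

private lemma key_identity {n : ℕ} (A : Matrix (Fin n) (Fin n) ℝ) (l₁ l₂ : ℝ)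
    (h₁ : IsUnit (A + l₁ • 1 : Matrix (Fin n) (Fin n) ℝ).det)
    (h₂ : IsUnit (A + l₂ • 1 : Matrix (Fin n) (Fin n) ℝ).det) :
    (A + l₁ • 1)⁻¹ * A * (A + l₁ • 1)⁻¹ - (A + l₂ • 1)⁻¹ * A * (A + l₂ • 1)⁻¹
      = (l₂ - l₁) • (((A + l₁ • 1)⁻¹ * (A + l₂ • 1)⁻¹) * (A * ((2:ℝ) • A + (l₁ + l₂) • 1))
          * ((A + l₁ • 1)⁻¹ * (A + l₂ • 1)⁻¹)) := by
  set C₁ : Matrix (Fin n) (Fin n) ℝ := A + l₁ • 1 with hC₁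
  set C₂ : Matrix (Fin n) (Fin n) ℝ := A + l₂ • 1 with hC₂
  set B₁ : Matrix (Fin n) (Fin n) ℝ := C₁⁻¹ with hB₁
  set B₂ : Matrix (Fin n) (Fin n) ℝ := C₂⁻¹ with hB₂
  set D : Matrix (Fin n) (Fin n) ℝ := (2:ℝ) • A + (l₁ + l₂) • 1 with hD
  have f1 : B₁ * C₁ = 1 := Matrix.nonsing_inv_mul C₁ h₁
  have f1' : C₁ * B₁ = 1 := Matrix.mul_nonsing_inv C₁ h₁
  have f2 : B₂ * C₂ = 1 := Matrix.nonsing_inv_mul C₂ h₂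
  have f2' : C₂ * B₂ = 1 := Matrix.mul_nonsing_inv C₂ h₂
  have hAC₁ : A * C₁ = C₁ * A := by
    simp [hC₁, mul_add, add_mul, Matrix.mul_smul, Matrix.smul_mul]
  have hAC₂ : A * C₂ = C₂ * A := by
    simp [hC₂, mul_add, add_mul, Matrix.mul_smul, Matrix.smul_mul]
  have hAB₁ : A * B₁ = B₁ * A := comm_inv h₁ hAC₁
  have hAB₂ : A * B₂ = B₂ * A := comm_inv h₂ hAC₂
  have hC₂B₁ : C₂ * B₁ = B₁ * C₂ := by
    have : C₂ * C₁ = C₁ * C₂ := by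
      simp only [hC₁, hC₂, mul_add, add_mul, Matrix.mul_smul, Matrix.smul_mul, mul_one, one_mul,
        smul_smul]
      rw [mul_comm l₁ l₂]
      abel
    exact comm_inv h₁ this
  have hB₁B₂ : B₁ * B₂ = B₂ * B₁ := comm_inv h₂ hC₂B₁.symm
  have hAD : A * D = D * A := by
    simp [hD, mul_add, add_mul, Matrix.mul_smul, Matrix.smul_mul]
  have hDB₁ : D * B₁ = B₁ * D := by
    simp only [hD, mul_add, add_mul, Matrix.mul_smul, Matrix.smul_mul, mul_one, one_mul, hAB₁]
  have hDB₂ : D * B₂ = B₂ * D := by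
    simp only [hD, mul_add, add_mul, Matrix.mul_smul, Matrix.smul_mul, mul_one, one_mul, hAB₂]
  have hd : B₁ - B₂ = (l₂ - l₁) • (B₁ * B₂) := by
    have hs : C₂ - C₁ = (l₂ - l₁) • (1 : Matrix (Fin n) (Fin n) ℝ) := by
      rw [hC₁, hC₂, sub_smul]; abel
    calc B₁ - B₂ = B₁ * (C₂ * B₂) - (B₁ * C₁) * B₂ := by rw [f2', f1, mul_one, one_mul]
      _ = B₁ * (C₂ - C₁) * B₂ := by
          rw [mul_sub B₁ C₂ C₁, sub_mul (B₁ * C₂) (B₁ * C₁) B₂]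
          simp only [mul_assoc]
      _ = (l₂ - l₁) • (B₁ * B₂) := by
          rw [hs, Matrix.mul_smul, mul_one, Matrix.smul_mul]
  have hp : B₁ + B₂ = B₁ * D * B₂ := by
    have hs : C₁ + C₂ = D := by
      rw [hC₁, hC₂, hD, two_smul, add_smul]; abel
    calc B₁ + B₂ = (B₁ * C₁) * B₂ + B₁ * (C₂ * B₂) := by
          rw [f2', f1, mul_one, one_mul, add_comm]
      _ = B₁ * (C₁ + C₂) * B₂ := by
          rw [mul_add B₁ C₁ C₂, add_mul (B₁ * C₁) (B₁ * C₂) B₂]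
          simp only [mul_assoc]
      _ = B₁ * D * B₂ := by rw [hs]
  have hsq : (B₁ - B₂) * (B₁ + B₂) = B₁ * B₁ - B₂ * B₂ := by
    rw [sub_mul B₁ B₂ (B₁ + B₂), mul_add B₁ B₁ B₂, mul_add B₂ B₁ B₂, ← hB₁B₂]
    abel
  have expand : B₁ * A * B₁ - B₂ * A * B₂ = A * ((B₁ - B₂) * (B₁ + B₂)) := by
    rw [hsq, mul_sub]
    rw [← hAB₁, ← hAB₂]
    simp only [mul_assoc]
  rw [expand, hd, hp, Matrix.smul_mul, Matrix.mul_smul]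
  congr 1
  simp only [mul_assoc, swapl hAB₁, swapl hAB₂, swapl hAD, swapl hDB₁, swapl hDB₂, swapl hB₁B₂,
    ← hAB₁, ← hAB₂, ← hAD, ← hDB₁, ← hDB₂, ← hB₁B₂]

/-- The norm of the ridge solution is nonincreasing in the regularization parameter. -/
theorem ridge_norm_antitone {N M : ℕ}
    (X : Matrix (Fin N) (Fin M) ℝ) (Y : Fin N → ℝ)
    (hX : IsUnit (X * Xᵀ).det)
    (lam₁ lam₂ : ℝ) (h₁ : 0 ≤ lam₁) (h₁₂ : lam₁ ≤ lam₂) :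
    ‖(WithLp.equiv 2 (Fin M → ℝ)).symm
        ((Xᵀ * (X * Xᵀ + lam₂ • (1 : Matrix (Fin N) (Fin N) ℝ))⁻¹).mulVec Y)‖ ≤
      ‖(WithLp.equiv 2 (Fin M → ℝ)).symm
        ((Xᵀ * (X * Xᵀ + lam₁ • (1 : Matrix (Fin N) (Fin N) ℝ))⁻¹).mulVec Y)‖ := by
  have h₂ : 0 ≤ lam₂ := le_trans h₁ h₁₂
  set A : Matrix (Fin N) (Fin N) ℝ := X * Xᵀ with hA
  have hAt : Aᵀ = A := by rw [hA, transpose_mul, transpose_transpose]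
  have hApsd : A.PosSemidef := by
    have := Matrix.posSemidef_self_mul_conjTranspose X
    rwa [conjTranspose_eq_transpose_of_trivial] at this
  have hApd : A.PosDef := by
    refine ⟨hApsd.1, fun x hx => lt_of_le_of_ne (hApsd.2 x) (Ne.symm ?_)⟩
    intro h0
    have hAx : A *ᵥ x = 0 := (hApsd.dotProduct_mulVec_zero_iff x).mp (by
      rw [← h0]; simp [dotProduct, mulVec, Finsupp.sum_fintype, Finset.mul_sum, mul_assoc])
    have hinj : Function.Injective A.mulVec :=
      Matrix.mulVec_injective_iff_isUnit.mpr ((Matrix.isUnit_iff_isUnit_det A).mpr hX)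
    exact hx (DFunLike.coe_injective (hinj (by simpa using hAx)))
  -- the regularized matrices and their properties
  have hCpd : ∀ l : ℝ, 0 ≤ l → (A + l • 1 : Matrix (Fin N) (Fin N) ℝ).PosDef := by
    intro l hl
    exact hApd.add_posSemidef (psd_smul' (Matrix.PosDef.one).posSemidef hl)
  have hCdet : ∀ l : ℝ, 0 ≤ l → IsUnit (A + l • 1 : Matrix (Fin N) (Fin N) ℝ).det := by
    intro l hl
    exact isUnit_iff_ne_zero.mpr (hCpd l hl).det_pos.ne'
  have hBt : ∀ l : ℝ, ((A + l • 1 : Matrix (Fin N) (Fin N) ℝ)⁻¹)ᵀ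
      = (A + l • 1 : Matrix (Fin N) (Fin N) ℝ)⁻¹ := by
    intro l
    rw [transpose_nonsing_inv, transpose_add, hAt, transpose_smul, transpose_one]
  set B₁ : Matrix (Fin N) (Fin N) ℝ := (A + lam₁ • 1)⁻¹ with hB₁
  set B₂ : Matrix (Fin N) (Fin N) ℝ := (A + lam₂ • 1)⁻¹ with hB₂
  -- the difference of quadratic-form matrices is PSD
  have hdiff : (B₁ * A * B₁ - B₂ * A * B₂).PosSemidef := by
    rw [key_identity A lam₁ lam₂ (hCdet lam₁ h₁) (hCdet lam₂ h₂)]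
    refine psd_smul' ?_ (by linarith)
    set S : Matrix (Fin N) (Fin N) ℝ := B₁ * B₂ with hS
    have hP : (A * ((2:ℝ) • A + (lam₁ + lam₂) • 1)).PosSemidef := by
      have heq : A * ((2:ℝ) • A + (lam₁ + lam₂) • 1)
          = (2:ℝ) • (A * A) + (lam₁ + lam₂) • A := by
        rw [mul_add, Matrix.mul_smul, Matrix.mul_smul, mul_one]
      rw [heq]
      refine Matrix.PosSemidef.add (psd_smul' ?_ (by norm_num)) (psd_smul' hApsd (by linarith))
      have := hApsd.pow 2
      rwa [pow_two] at this
    have hSh : Sᴴ = S := by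
      rw [conjTranspose_eq_transpose_of_trivial, hS, transpose_mul, hBt, hBt]
      have hcc : (A + lam₁ • 1) * (A + lam₂ • 1) = (A + lam₂ • 1) * (A + lam₁ • 1) := by
        simp only [mul_add, add_mul, Matrix.mul_smul, Matrix.smul_mul, mul_one, one_mul, smul_smul]
        rw [mul_comm lam₁ lam₂]
        abel
      exact comm_inv (hCdet lam₁ h₁) (comm_inv (hCdet lam₂ h₂) hcc).symm
    have := hP.mul_mul_conjTranspose_same S
    rwa [hSh] at this
  -- quadratic forms
  have hq : Y ⬝ᵥ ((B₂ * A * B₂) *ᵥ Y) ≤ Y ⬝ᵥ ((B₁ * A * B₁) *ᵥ Y) := by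
    have h0 := hdiff.dotProduct_mulVec_nonneg Y
    rw [star_trivial, sub_mulVec, dotProduct_sub] at h0
    linarith
  -- from quadratic forms to norms
  rw [EuclideanSpace.norm_eq, EuclideanSpace.norm_eq]
  apply Real.sqrt_le_sqrt
  have hconv : ∀ B : Matrix (Fin N) (Fin N) ℝ,
      (∑ i, ‖((WithLp.equiv 2 (Fin M → ℝ)).symm ((Xᵀ * B) *ᵥ Y)) i‖ ^ 2)
        = ((Xᵀ * B) *ᵥ Y) ⬝ᵥ ((Xᵀ * B) *ᵥ Y) := by
    intro B
    simp only [WithLp.equiv_symm_apply, WithLp.ofLp_toLp, Real.norm_eq_abs, dotProduct, pow_two, abs_mul_abs_self]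
  rw [hconv, hconv, quad_eq' X Y B₁ (hBt lam₁), quad_eq' X Y B₂ (hBt lam₂)]
  exact hq
end
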